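/- arXiv:1212.2336 — 2 statements merged into one kernel-verified Lean document; each statement's English description precedes it below -/
import Mathlib

section
/- Let W ∈ 𝒱_n and 1 ≤ i ≤ n, and suppose that W ∩ V_i is not s_i-invariant. Then the restriction homomorphism O(V_i) → O(W ∩ V_i), restricted to the fixed subalgebra O(V_i)^{s_i}, is surjective; that is, every regular function on W ∩ V_i extends to an s_i-invariant regular function on V_i. -/
/-! Basic setup: type A_n geometric representation, Weyl lines, combinatorics. -/

set_option linter.unusedSectionVars false
set_option synthInstance.maxHeartbeats 1000000
set_option maxHeartbeats 1000000

namespace TLpaper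

/-- A permutation is a transposition. -/
def IsTransposition {α : Type} [DecidableEq α] (σ : Equiv.Perm α) : Prop :=
  ∃ a b, a ≠ b ∧ σ = Equiv.swap a b

variable (k : Type) [Field k] [CharZero k] (n : ℕ)

/-- The reflecting hyperplane of a permutation `t` inside `V = {x | ∑ x i = 0}`:
the set of points of `V` fixed by permuting the coordinates by `t`.  For a
transposition `t = (a b)` this is `{x ∈ V | x a = x b}`. -/
def Hyp (t : Equiv.Perm (Fin (n + 1))) : Set (Fin (n + 1) → k) :=
  {x | (∑ i, x i) = 0 ∧ ∀ i, x (t i) = x i}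

/-- A Weyl line: a one-dimensional linear subspace of `V` which is an
intersection of a (possibly empty) family of reflecting hyperplanes. -/
def IsWeylLine (L : Set (Fin (n + 1) → k)) : Prop :=
  (∃ v : Fin (n + 1) → k, v ≠ 0 ∧ L = Set.range fun c : k => c • v) ∧
  ∃ T : Set (Equiv.Perm (Fin (n + 1))),
    (∀ t ∈ T, IsTransposition t) ∧
    L = {x | (∑ i, x i) = 0} ∩ ⋂ t ∈ T, Hyp k n t

/-- `Z`: the union of all Weyl lines. -/
def ZZ : Set (Fin (n + 1) → k) := ⋃ L ∈ {L | IsWeylLine k n L}, L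

/-- `V_t`: the union of all Weyl lines transverse to `t` (i.e. not contained in `H_t`). -/
def Vt (t : Equiv.Perm (Fin (n + 1))) : Set (Fin (n + 1) → k) :=
  ⋃ L ∈ {L | IsWeylLine k n L ∧ ¬L ⊆ Hyp k n t}, L

open Fin.NatCast in
/-- The simple transposition `s_i = (i, i+1)` (0-indexed: it swaps coordinates
`i` and `i+1` of `Fin (n+1)`, for `i < n`). -/
def simple (i : ℕ) : Equiv.Perm (Fin (n + 1)) :=
  Equiv.swap (i : Fin (n + 1)) ((i + 1 : ℕ) : Fin (n + 1))

/-- `V_i := V_{s_i}`. -/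
def Vi (i : ℕ) : Set (Fin (n + 1) → k) := Vt k n (simple n i)

/-- The action of a permutation on a subset of `k^{n+1}` (permuting coordinates). -/
def permSet (σ : Equiv.Perm (Fin (n + 1))) (W : Set (Fin (n + 1) → k)) :
    Set (Fin (n + 1) → k) :=
  (fun x => x ∘ σ) '' W

/-- `i · W := V_i ∩ (W ∪ s_i (W))`. -/
def dotAct (i : ℕ) (W : Set (Fin (n + 1) → k)) : Set (Fin (n + 1) → k) :=
  Vi k n i ∩ (W ∪ permSet k n (simple n i) W)

/-- The set `W_{i_1 ⋯ i_m}` associated with a sequence of indices. -/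
def seqSet : List ℕ → Set (Fin (n + 1) → k)
  | [] => ZZ k n
  | [i] => Vi k n i
  | i :: j :: l => dotAct k n i (seqSet (j :: l))

/-- Membership in the family `𝒱_n`. -/
def memVn (W : Set (Fin (n + 1) → k)) : Prop :=
  ∃ l : List ℕ, l ≠ [] ∧ (∀ i ∈ l, i < n) ∧ W = seqSet k n l

/-- A set of pairwise commuting transpositions. -/
def CommTranspositions (Q : Set (Equiv.Perm (Fin (n + 1)))) : Prop :=
  (∀ t ∈ Q, IsTransposition t) ∧ ∀ t ∈ Q, ∀ t' ∈ Q, t * t' = t' * t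


/-! Coordinate rings of subvarieties of `k^{n+1}`. -/

noncomputable section

/-- The ring `O(X)` of regular functions on `X`: the quotient of the polynomial ring
`k[X_0, …, X_n]` by the vanishing ideal of `X`. -/
def O (X : Set (Fin (n + 1) → k)) : Type :=
  MvPolynomial (Fin (n + 1)) k ⧸ MvPolynomial.vanishingIdeal k X

instance (X : Set (Fin (n + 1) → k)) : CommRing (O k n X) :=
  inferInstanceAs (CommRing (MvPolynomial (Fin (n + 1)) k ⧸ MvPolynomial.vanishingIdeal k X))

theorem vanishingIdeal_anti {X Y : Set (Fin (n + 1) → k)} (h : X ⊆ Y) :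
    MvPolynomial.vanishingIdeal k Y ≤ MvPolynomial.vanishingIdeal k X := fun p hp => by
  rw [MvPolynomial.mem_vanishingIdeal_iff] at hp ⊢
  exact fun x hx => hp x (h hx)

/-- The (surjective) restriction homomorphism `O(Y) → O(X)` for `X ⊆ Y`. -/
def res {X Y : Set (Fin (n + 1) → k)} (h : X ⊆ Y) : O k n Y →+* O k n X :=
  Ideal.Quotient.factor (vanishingIdeal_anti k n h)

open Classical in
/-- The ring endomorphism of `O(X)` induced by a permutation `σ` of the coordinates
(when `X` is `σ`-stable; the definition branches on this (true, in our uses)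
stability condition to be total). -/
def permO (σ : Equiv.Perm (Fin (n + 1))) (X : Set (Fin (n + 1) → k)) :
    O k n X →+* O k n X :=
  if h : ∀ x ∈ X, x ∘ σ ∈ X then
    Ideal.Quotient.lift _
      ((Ideal.Quotient.mk _).comp (MvPolynomial.rename (R := k) ⇑σ).toRingHom)
      (fun p hp => by
        have hmem : (MvPolynomial.rename (R := k) ⇑σ) p ∈
            MvPolynomial.vanishingIdeal k X := by
          rw [MvPolynomial.mem_vanishingIdeal_iff]
          intro x hx
          rw [MvPolynomial.aeval_rename]
          exact (MvPolynomial.mem_vanishingIdeal_iff.1 hp) _ (h x hx)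
        exact Ideal.Quotient.eq_zero_iff_mem.2 hmem)
  else RingHom.id _

/-- The fixed subalgebra `O(V_i)^{s_i}` of `O(V_i)` under the automorphism induced
by the simple transposition `s_i`. -/
def fixedO (i : ℕ) : Subring (O k n (Vi k n i)) :=
  RingHom.eqLocus (permO k n (simple n i) (Vi k n i)) (RingHom.id _)

open Fin.NatCast in
/-- The image `f_i` of `X_i − X_{i+1}` in the coordinate ring `O(X)`. -/
def fbar (X : Set (Fin (n + 1) → k)) (i : ℕ) : O k n X :=
  Ideal.Quotient.mk _
    (MvPolynomial.X (i : Fin (n + 1)) - MvPolynomial.X ((i + 1 : ℕ) : Fin (n + 1)))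

theorem Vt_subset_ZZ (t : Equiv.Perm (Fin (n + 1))) : Vt k n t ⊆ ZZ k n := by
  refine Set.iUnion₂_subset fun L hL => ?_
  exact Set.subset_iUnion₂ (s := fun L _ => L) L hL.1

theorem Vi_subset_ZZ (i : ℕ) : Vi k n i ⊆ ZZ k n := Vt_subset_ZZ k n _

theorem seqSet_subset_ZZ : ∀ l : List ℕ, seqSet k n l ⊆ ZZ k n
  | [] => subset_rfl
  | [_] => Vi_subset_ZZ k n _
  | _ :: _ :: _ => Set.inter_subset_left.trans (Vi_subset_ZZ k n _)

end

open Fin.NatCast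

/-! ### Auxiliary development: two-block lines -/

section Dev

open Finset

variable {k n}

/-- `A` separates the pair `c`. -/
def sepa (A : Finset (Fin (n + 1))) (c : Fin (n + 1) × Fin (n + 1)) : Prop :=
  c.1 ∈ A ↔ c.2 ∉ A

/-- The line associated with a two-block partition `{A, Aᶜ}`. -/
def LA (A : Finset (Fin (n + 1))) : Set (Fin (n + 1) → k) :=
  {x | (∑ a, x a) = 0 ∧ (∀ a ∈ A, ∀ b ∈ A, x a = x b) ∧ (∀ a ∈ Aᶜ, ∀ b ∈ Aᶜ, x a = x b)}

theorem zero_mem_LA (A : Finset (Fin (n + 1))) : (0 : Fin (n + 1) → k) ∈ LA A := by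
  refine ⟨by simp, fun _ _ _ _ => rfl, fun _ _ _ _ => rfl⟩

theorem same_side_eq {A : Finset (Fin (n + 1))} {x : Fin (n + 1) → k} (hx : x ∈ LA A)
    {p q : Fin (n + 1)} (h : p ∈ A ↔ q ∈ A) : x p = x q := by
  by_cases hp : p ∈ A
  · exact hx.2.1 p hp q (h.mp hp)
  · exact hx.2.2 p (Finset.mem_compl.mpr hp) q (Finset.mem_compl.mpr fun hq => hp (h.mpr hq))

theorem const_eq_zero {x : Fin (n + 1) → k} (hc : ∀ a b : Fin (n + 1), x a = x b)
    (hs : (∑ a, x a) = 0) : x = 0 := by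
  have h1 : ∑ a : Fin (n + 1), x a = (n + 1 : ℕ) • x 0 := by
    have : ∑ a : Fin (n + 1), x a = ∑ _a : Fin (n + 1), x 0 :=
      Finset.sum_congr rfl fun b _ => hc b 0
    rwa [Finset.sum_const, Finset.card_univ, Fintype.card_fin] at this
  funext a
  have hx0 : x 0 = 0 := by
    have := h1.symm.trans hs
    rw [nsmul_eq_mul] at this
    rcases mul_eq_zero.mp this with h | h
    · exact absurd h (by exact_mod_cast Nat.succ_ne_zero n)
    · exact h
  rw [Pi.zero_apply, hc a 0, hx0]

theorem LA_values_ne {A : Finset (Fin (n + 1))} {x : Fin (n + 1) → k} (hx : x ∈ LA A)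
    (hx0 : x ≠ 0) {p q : Fin (n + 1)} (hp : p ∈ A) (hq : q ∉ A) : x p ≠ x q := by
  intro heq
  refine hx0 (const_eq_zero (fun a b => ?_) hx.1)
  have key : ∀ a, x a = x p := by
    intro a
    by_cases ha : a ∈ A
    · exact hx.2.1 a ha p hp
    · exact (hx.2.2 a (Finset.mem_compl.mpr ha) q (Finset.mem_compl.mpr hq)).trans heq.symm
  rw [key a, key b]

theorem LA_eq_or_compl {A B : Finset (Fin (n + 1))} {x : Fin (n + 1) → k}
    (hxA : x ∈ LA A) (hxB : x ∈ LA B) (hx0 : x ≠ 0)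
    (hA1 : A.Nonempty) (hA2 : A ≠ Finset.univ)
    (hB1 : B.Nonempty) (hB2 : B ≠ Finset.univ) : B = A ∨ B = Aᶜ := by
  have hBA : B ⊆ A ∨ B ⊆ Aᶜ := by
    by_contra hcon
    push_neg at hcon
    obtain ⟨p, hpB, hpA⟩ := Finset.not_subset.mp hcon.1
    obtain ⟨q, hqB, hqA⟩ := Finset.not_subset.mp hcon.2
    have hqA' : q ∈ A := by
      by_contra hq; exact hqA (Finset.mem_compl.mpr hq)
    exact LA_values_ne hxA hx0 hqA' hpA ((hxB.2.1 q hqB p hpB))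
  have hBcA : Bᶜ ⊆ A ∨ Bᶜ ⊆ Aᶜ := by
    by_contra hcon
    push_neg at hcon
    obtain ⟨p, hpB, hpA⟩ := Finset.not_subset.mp hcon.1
    obtain ⟨q, hqB, hqA⟩ := Finset.not_subset.mp hcon.2
    have hqA' : q ∈ A := by
      by_contra hq; exact hqA (Finset.mem_compl.mpr hq)
    exact LA_values_ne hxA hx0 hqA' hpA ((hxB.2.2 q hqB p hpB))
  rcases hBA with h1 | h1 <;> rcases hBcA with h2 | h2
  · exact absurd (Finset.eq_univ_of_forall fun a => by
      by_cases ha : a ∈ B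
      · exact h1 ha
      · exact h2 (Finset.mem_compl.mpr ha)) hA2
  · left
    apply Finset.Subset.antisymm h1
    intro a ha
    by_contra hb
    exact Finset.mem_compl.mp (h2 (Finset.mem_compl.mpr hb)) ha
  · right
    apply Finset.Subset.antisymm h1
    intro a ha
    by_contra hb
    exact Finset.mem_compl.mp ha (h2 (Finset.mem_compl.mpr hb))
  · exact absurd (Finset.eq_empty_iff_forall_notMem.mpr fun a ha => by
      by_cases hb : a ∈ B
      · exact Finset.mem_compl.mp (h1 hb) ha
      · exact Finset.mem_compl.mp (h2 (Finset.mem_compl.mpr hb)) ha)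
      (Finset.nonempty_iff_ne_empty.mp hA1)

end Dev

section Dev2

open Finset MvPolynomial

variable {k n}


theorem sepa_cases {A : Finset (Fin (n + 1))} {u v : Fin (n + 1)} (h : sepa A (u, v)) :
    (u ∈ A ∧ v ∉ A) ∨ (v ∈ A ∧ u ∉ A) := by
  by_cases hu : u ∈ A <;> by_cases hv : v ∈ A <;> simp_all [sepa]

theorem sepa_proper {A : Finset (Fin (n + 1))} {c : Fin (n + 1) × Fin (n + 1)}
    (h : sepa A c) : A.Nonempty ∧ A ≠ Finset.univ := by
  rcases sepa_cases h with ⟨h1, h2⟩ | ⟨h1, h2⟩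
  · exact ⟨⟨c.1, h1⟩, fun he => h2 (he ▸ Finset.mem_univ _)⟩
  · exact ⟨⟨c.2, h1⟩, fun he => h2 (he ▸ Finset.mem_univ _)⟩

theorem sepa_compl {A : Finset (Fin (n + 1))} {c : Fin (n + 1) × Fin (n + 1)} :
    sepa Aᶜ c ↔ sepa A c := by
  simp only [sepa, Finset.mem_compl]; tauto

theorem sepa_symm {A : Finset (Fin (n + 1))} {u v : Fin (n + 1)} :
    sepa A (u, v) ↔ sepa A (v, u) := by
  simp only [sepa]; tauto

/-- The canonical spanning vector of `LA A`. -/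
def vA (A : Finset (Fin (n + 1))) : Fin (n + 1) → k := fun a =>
  if a ∈ A then (Aᶜ.card : k) else -(A.card : k)

theorem card_add_card_compl_k (A : Finset (Fin (n + 1))) :
    (A.card : k) + (Aᶜ.card : k) = (n + 1 : k) := by
  have := Finset.card_add_card_compl A
  rw [Fintype.card_fin] at this
  exact_mod_cast congrArg (Nat.cast : ℕ → k) this

theorem sum_split {x : Fin (n + 1) → k} {A : Finset (Fin (n + 1))}
    {α β : k} (hA : ∀ a ∈ A, x a = α) (hB : ∀ a ∈ Aᶜ, x a = β) :
    (∑ a, x a) = (A.card : k) * α + (Aᶜ.card : k) * β := by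
  rw [← Finset.sum_add_sum_compl A x]
  rw [Finset.sum_congr rfl hA, Finset.sum_congr rfl hB]
  simp [Finset.sum_const, nsmul_eq_mul]

theorem vA_mem_LA (A : Finset (Fin (n + 1))) : (vA A : Fin (n + 1) → k) ∈ LA A := by
  refine ⟨?_, ?_, ?_⟩
  · rw [sum_split (α := (Aᶜ.card : k)) (β := -(A.card : k)) (A := A)
      (fun a ha => by simp [vA, ha]) (fun a ha => by simp [vA, Finset.mem_compl.mp ha])]
    ring
  · intro a ha b hb; simp [vA, ha, hb]
  · intro a ha b hb
    simp [vA, Finset.mem_compl.mp ha, Finset.mem_compl.mp hb]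

theorem vA_ne_zero {A : Finset (Fin (n + 1))} (hA1 : A.Nonempty) (hA2 : A ≠ Finset.univ) :
    (vA A : Fin (n + 1) → k) ≠ 0 := by
  obtain ⟨a, ha⟩ := hA1
  intro h
  have : (vA A : Fin (n + 1) → k) a = 0 := by rw [h]; rfl
  rw [vA, if_pos ha] at this
  have hc : Aᶜ.card ≠ 0 := by
    simpa [Finset.card_eq_zero, Finset.compl_eq_empty_iff] using hA2
  exact hc (by exact_mod_cast this)

theorem vA_uv_ne {A : Finset (Fin (n + 1))} {u v : Fin (n + 1)}
    (hsep : sepa A (u, v)) : (vA A : Fin (n + 1) → k) u ≠ (vA A : Fin (n + 1) → k) v := by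
  have hval : ∀ p q : Fin (n + 1), p ∈ A → q ∉ A →
      (vA A : Fin (n + 1) → k) p ≠ (vA A : Fin (n + 1) → k) q := by
    intro p q hp hq heq
    simp only [vA, if_pos hp, if_neg hq] at heq
    have h0 : ((A.card : k) + (Aᶜ.card : k)) = 0 := by linear_combination heq
    rw [card_add_card_compl_k] at h0
    exact (by exact_mod_cast Nat.succ_ne_zero n : ((n : k) + 1) ≠ 0) h0
  rcases sepa_cases hsep with ⟨hu, hv⟩ | ⟨hv, hu⟩
  · exact hval u v hu hv
  · exact fun h => hval v u hv hu h.symm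

theorem LA_eq_range {A : Finset (Fin (n + 1))} (hA1 : A.Nonempty) (hA2 : A ≠ Finset.univ) :
    LA (k := k) A = Set.range fun c : k => c • vA A := by
  obtain ⟨a₀, ha₀⟩ := hA1
  obtain ⟨b₀, hb₀⟩ : Aᶜ.Nonempty := by
    rw [← Finset.card_pos, Finset.card_compl, Fintype.card_fin]
    have := Finset.card_lt_card (Finset.ssubset_univ_iff.mpr hA2)
    rw [Finset.card_univ, Fintype.card_fin] at this
    omega
  have hb₀' : b₀ ∉ A := Finset.mem_compl.mp hb₀
  have hn1 : ((n : k) + 1) ≠ 0 := by exact_mod_cast Nat.succ_ne_zero n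
  ext x
  constructor
  · intro hx
    refine ⟨(x a₀ - x b₀) / (n + 1), funext fun a => ?_⟩
    have hsum : (A.card : k) * x a₀ + (Aᶜ.card : k) * x b₀ = 0 := by
      rw [← sum_split (fun a ha => hx.2.1 a ha a₀ ha₀) (fun a ha => hx.2.2 a ha b₀ hb₀)]
      exact hx.1
    have hcard := card_add_card_compl_k (k := k) A
    by_cases ha : a ∈ A
    · have hxa : x a = x a₀ := hx.2.1 a ha a₀ ha₀
      simp only [Pi.smul_apply, vA, if_pos ha, smul_eq_mul]
      rw [hxa, div_mul_eq_mul_div, div_eq_iff hn1]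
      linear_combination x a₀ * hcard - hsum
    · have hxa : x a = x b₀ := hx.2.2 a (Finset.mem_compl.mpr ha) b₀ hb₀
      simp only [Pi.smul_apply, vA, if_neg ha, smul_eq_mul]
      rw [hxa, div_mul_eq_mul_div, div_eq_iff hn1]
      linear_combination x b₀ * hcard - hsum
  · rintro ⟨c, rfl⟩
    refine ⟨?_, fun a ha b hb => ?_, fun a ha b hb => ?_⟩
    · simp only [Pi.smul_apply, smul_eq_mul, ← Finset.mul_sum]
      rw [(vA_mem_LA (k := k) A).1, mul_zero]
    · simp [vA, ha, hb]
    · simp [vA, Finset.mem_compl.mp ha, Finset.mem_compl.mp hb]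

theorem mem_Hyp_swap {u v : Fin (n + 1)} {x : Fin (n + 1) → k} :
    x ∈ Hyp k n (Equiv.swap u v) ↔ (∑ a, x a) = 0 ∧ x u = x v := by
  constructor
  · intro ⟨h1, h2⟩
    refine ⟨h1, ?_⟩
    have := h2 u
    rw [Equiv.swap_apply_left] at this
    exact this.symm
  · intro ⟨h1, h2⟩
    refine ⟨h1, fun a => ?_⟩
    rcases eq_or_ne a u with rfl | hau
    · rw [Equiv.swap_apply_left]; exact h2.symm
    rcases eq_or_ne a v with rfl | hav
    · rw [Equiv.swap_apply_right]; exact h2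
    · rw [Equiv.swap_apply_of_ne_of_ne hau hav]

theorem LA_subset_Hyp {A : Finset (Fin (n + 1))} {u v : Fin (n + 1)}
    (h : ¬ sepa A (u, v)) : LA (k := k) A ⊆ Hyp k n (Equiv.swap u v) := by
  intro x hx
  rw [mem_Hyp_swap]
  refine ⟨hx.1, same_side_eq hx ?_⟩
  by_cases hu : u ∈ A <;> by_cases hv : v ∈ A <;> simp_all [sepa]

theorem LA_isWeylLine {A : Finset (Fin (n + 1))} (hA1 : A.Nonempty) (hA2 : A ≠ Finset.univ) :
    IsWeylLine k n (LA (k := k) A) := by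
  constructor
  · exact ⟨vA A, vA_ne_zero hA1 hA2, LA_eq_range hA1 hA2⟩
  · refine ⟨{t | ∃ a b, a ≠ b ∧ (a ∈ A ↔ b ∈ A) ∧ t = Equiv.swap a b}, ?_, ?_⟩
    · rintro t ⟨a, b, hab, _, rfl⟩; exact ⟨a, b, hab, rfl⟩
    · ext x
      simp only [Set.mem_inter_iff, Set.mem_setOf_eq, Set.mem_iInter]
      constructor
      · intro hx
        refine ⟨hx.1, ?_⟩
        rintro t ⟨a, b, hab, hside, rfl⟩
        exact mem_Hyp_swap.mpr ⟨hx.1, same_side_eq hx hside⟩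
      · intro ⟨h1, h2⟩
        refine ⟨h1, fun a ha b hb => ?_, fun a ha b hb => ?_⟩
        · rcases eq_or_ne a b with rfl | hab
          · rfl
          · exact (mem_Hyp_swap.mp (h2 _ ⟨a, b, hab, by simp [ha, hb], rfl⟩)).2
        · rcases eq_or_ne a b with rfl | hab
          · rfl
          · exact (mem_Hyp_swap.mp (h2 _ ⟨a, b, hab,
              by simp [Finset.mem_compl.mp ha, Finset.mem_compl.mp hb], rfl⟩)).2

end Dev2

section Dev3

variable {k n}

open Classical in
theorem cnt_sum {v : Fin (n + 1) → k} {α β : k} (hab : α ≠ β) (xv yv : k) :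
    (∑ a, (if v a = α then xv else if v a = β then yv else 0)) =
      ((Finset.univ.filter (fun a => v a = α)).card : k) * xv +
      ((Finset.univ.filter (fun a => v a = β)).card : k) * yv := by
  classical
  rw [← Finset.sum_filter_add_sum_filter_not Finset.univ (fun a => v a = α)]
  have h1 : (∑ a ∈ Finset.univ.filter (fun a => v a = α),
      (if v a = α then xv else if v a = β then yv else 0)) =
      ((Finset.univ.filter (fun a => v a = α)).card : k) * xv := by
    rw [Finset.sum_congr rfl (fun a ha => if_pos (Finset.mem_filter.mp ha).2),
      Finset.sum_const, nsmul_eq_mul]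
  have h2 : (∑ a ∈ Finset.univ.filter (fun a => ¬ v a = α),
      (if v a = α then xv else if v a = β then yv else 0)) =
      ((Finset.univ.filter (fun a => v a = β)).card : k) * yv := by
    have hcg : ∀ a ∈ Finset.univ.filter (fun a => ¬ v a = α),
        (if v a = α then xv else if v a = β then yv else 0) =
        (if v a = β then yv else 0) := by
      intro a ha; rw [if_neg (Finset.mem_filter.mp ha).2]
    rw [Finset.sum_congr rfl hcg, ← Finset.sum_filter, Finset.filter_filter]
    have hset : (Finset.univ.filter (fun a => ¬v a = α ∧ v a = β)) =
        Finset.univ.filter (fun a => v a = β) :=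
      Finset.filter_congr (fun a _ =>
        ⟨And.right, fun h => ⟨fun hα => hab (hα.symm.trans h), h⟩⟩)
    rw [hset, Finset.sum_const, nsmul_eq_mul]
  rw [h1, h2]

open Classical in
theorem weyl_structure {L : Set (Fin (n + 1) → k)} (h : IsWeylLine k n L) :
    ∃ A : Finset (Fin (n + 1)), A.Nonempty ∧ A ≠ Finset.univ ∧ L = LA (k := k) A := by
  classical
  obtain ⟨⟨v, hv0, hvr⟩, T, hT, hLT⟩ := h
  have hvL : v ∈ L := hvr ▸ ⟨1, one_smul _ _⟩
  rw [hLT] at hvL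
  obtain ⟨hvsum, hvH⟩ := hvL
  have hvH' : ∀ t ∈ T, ∀ i, v (t i) = v i := by
    intro t ht i
    exact (Set.mem_iInter₂.mp hvH t ht).2 i
  have hmem : ∀ f : k → k, (∑ a, f (v a)) = 0 → ∃ c : k, ∀ a, f (v a) = c * v a := by
    intro f hf
    have hx : (fun a => f (v a)) ∈ L := by
      rw [hLT]
      exact ⟨hf, Set.mem_iInter₂.mpr fun t ht => ⟨hf, fun i => congrArg f (hvH' t ht i)⟩⟩
    rw [hvr] at hx
    obtain ⟨c, hc⟩ := hx
    exact ⟨c, fun a => by simpa using (congrFun hc a).symm⟩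
  have h2v : ∀ p q r : Fin (n + 1), v p = v q ∨ v p = v r ∨ v q = v r := by
    intro p q r
    by_contra hcon
    push_neg at hcon
    obtain ⟨hpq, hpr, hqr⟩ := hcon
    by_cases hr0 : v r = 0
    · set Sq := (Finset.univ.filter (fun a => v a = v q)).card with hSq
      set Sr := (Finset.univ.filter (fun a => v a = v r)).card with hSr
      obtain ⟨c, hc⟩ := hmem (fun w => if w = v q then (Sr : k) else if w = v r then -(Sq : k) else 0)
        (by rw [cnt_sum hqr (Sr : k) (-(Sq : k))]; ring)
      have hr := hc r
      rw [if_neg (fun h : v r = v q => hqr h.symm), if_pos rfl, hr0, mul_zero] at hr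
      have hq0 : Sq = 0 := by exact_mod_cast neg_eq_zero.mp hr
      have hqmem : q ∈ Finset.univ.filter (fun a => v a = v q) := by simp
      rw [Finset.card_eq_zero.mp hq0] at hqmem
      exact absurd hqmem (Finset.notMem_empty q)
    · set Sp := (Finset.univ.filter (fun a => v a = v p)).card with hSp
      set Sq := (Finset.univ.filter (fun a => v a = v q)).card with hSq
      obtain ⟨c, hc⟩ := hmem (fun w => if w = v p then (Sq : k) else if w = v q then -(Sp : k) else 0)
        (by rw [cnt_sum hpq (Sq : k) (-(Sp : k))]; ring)
      have hr := hc r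
      rw [if_neg (fun h : v r = v p => hpr h.symm), if_neg (fun h : v r = v q => hqr h.symm)] at hr
      have hc0 : c = 0 := by
        rcases mul_eq_zero.mp hr.symm with h | h
        · exact h
        · exact absurd h hr0
      have hp := hc p
      rw [if_pos rfl, hc0, zero_mul] at hp
      have hq0 : Sq = 0 := by exact_mod_cast hp
      have hqmem : q ∈ Finset.univ.filter (fun a => v a = v q) := by simp
      rw [Finset.card_eq_zero.mp hq0] at hqmem
      exact absurd hqmem (Finset.notMem_empty q)
  obtain ⟨p, q, hpq⟩ : ∃ p q : Fin (n + 1), v p ≠ v q := by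
    by_contra hcon
    push_neg at hcon
    exact hv0 (const_eq_zero hcon hvsum)
  refine ⟨Finset.univ.filter (fun a => v a = v p), ⟨p, by simp⟩, fun hE => ?_, ?_⟩
  · have hq : q ∈ Finset.univ.filter (fun a => v a = v p) := by rw [hE]; exact Finset.mem_univ q
    exact hpq (Finset.mem_filter.mp hq).2.symm
  · ext x
    constructor
    · intro hx
      rw [hvr] at hx
      obtain ⟨c, rfl⟩ := hx
      refine ⟨?_, fun a ha b hb => ?_, fun a ha b hb => ?_⟩
      · show (∑ a, c * v a) = 0
        rw [← Finset.mul_sum, hvsum, mul_zero]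
      · show c * v a = c * v b
        rw [(Finset.mem_filter.mp ha).2, (Finset.mem_filter.mp hb).2]
      · show c * v a = c * v b
        have ha' : ¬ v a = v p := by
          have := Finset.mem_compl.mp ha; simpa using this
        have hb' : ¬ v b = v p := by
          have := Finset.mem_compl.mp hb; simpa using this
        rcases h2v p a b with h | h | h
        · exact absurd h.symm ha'
        · exact absurd h.symm hb'
        · rw [h]
    · intro hx
      rw [hLT]
      refine ⟨hx.1, Set.mem_iInter₂.mpr fun t ht => ?_⟩
      obtain ⟨a, b, hab, rfl⟩ := hT t ht
      have hvab : v b = v a := by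
        have := hvH' _ ht a
        rwa [Equiv.swap_apply_left] at this
      have hside : a ∈ Finset.univ.filter (fun a => v a = v p) ↔
          b ∈ Finset.univ.filter (fun a => v a = v p) := by
        simp [Finset.mem_filter, hvab]
      exact mem_Hyp_swap.mpr ⟨hx.1, same_side_eq hx hside⟩

end Dev3

section Dev4

open Finset

variable {k n}

/-- Union of the lines `LA A` over a family of subsets. -/
def WF (P : Finset (Fin (n + 1)) → Prop) : Set (Fin (n + 1) → k) :=
  ⋃ A ∈ {A : Finset (Fin (n + 1)) | P A}, LA (k := k) A

theorem mem_WF {P : Finset (Fin (n + 1)) → Prop} {x : Fin (n + 1) → k} :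
    x ∈ WF (k := k) P ↔ ∃ A, P A ∧ x ∈ LA (k := k) A := by
  simp [WF]

theorem WF_congr {P Q : Finset (Fin (n + 1)) → Prop} (h : ∀ A, P A ↔ Q A) :
    WF (k := k) P = WF (k := k) Q := by
  ext x; rw [mem_WF, mem_WF]
  exact exists_congr fun A => and_congr_left fun _ => h A

theorem WF_union {P Q : Finset (Fin (n + 1)) → Prop} :
    WF (k := k) P ∪ WF (k := k) Q = WF (k := k) (fun A => P A ∨ Q A) := by
  ext x
  simp only [Set.mem_union, mem_WF]
  constructor
  · rintro (⟨A, h1, h2⟩ | ⟨A, h1, h2⟩)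
    · exact ⟨A, Or.inl h1, h2⟩
    · exact ⟨A, Or.inr h1, h2⟩
  · rintro ⟨A, h1 | h1, h2⟩
    · exact Or.inl ⟨A, h1, h2⟩
    · exact Or.inr ⟨A, h1, h2⟩

theorem WF_inter {P Q : Finset (Fin (n + 1)) → Prop}
    (hP : ∀ A, P A → A.Nonempty ∧ A ≠ Finset.univ)
    (hQ : ∀ A, Q A → A.Nonempty ∧ A ≠ Finset.univ)
    (hQc : ∀ A, Q A → Q Aᶜ)
    (hW : ∃ A, P A ∧ Q A) :
    WF (k := k) P ∩ WF (k := k) Q = WF (k := k) (fun A => P A ∧ Q A) := by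
  ext x
  simp only [Set.mem_inter_iff, mem_WF]
  constructor
  · rintro ⟨⟨A, hA, hxA⟩, ⟨B, hB, hxB⟩⟩
    by_cases hx0 : x = 0
    · obtain ⟨A₀, h1, h2⟩ := hW
      exact ⟨A₀, ⟨h1, h2⟩, hx0 ▸ zero_mem_LA A₀⟩
    · rcases LA_eq_or_compl hxA hxB hx0 (hP A hA).1 (hP A hA).2 (hQ B hB).1 (hQ B hB).2 with
        h | h
      · exact ⟨A, ⟨hA, h ▸ hB⟩, hxA⟩
      · refine ⟨A, ⟨hA, ?_⟩, hxA⟩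
        have := hQc _ (h ▸ hB)
        rwa [compl_compl] at this
  · rintro ⟨A, ⟨h1, h2⟩, h3⟩
    exact ⟨⟨A, h1, h3⟩, ⟨A, h2, h3⟩⟩

theorem mem_image_swap {A : Finset (Fin (n + 1))} {u v p : Fin (n + 1)} :
    p ∈ A.image (Equiv.swap u v) ↔ Equiv.swap u v p ∈ A := by
  rw [Finset.mem_image]
  constructor
  · rintro ⟨a, ha, rfl⟩
    rwa [Equiv.swap_apply_self]
  · intro h
    exact ⟨_, h, Equiv.swap_apply_self _ _ _⟩

theorem image_swap_image_swap {A : Finset (Fin (n + 1))} {u v : Fin (n + 1)} :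
    (A.image (Equiv.swap u v)).image (Equiv.swap u v) = A := by
  rw [Finset.image_image]
  have h : (⇑(Equiv.swap u v) ∘ ⇑(Equiv.swap u v)) = id := by
    funext a; simp [Function.comp, Equiv.swap_apply_self]
  rw [h, Finset.image_id]

theorem LA_comp_swap {A : Finset (Fin (n + 1))} {u v : Fin (n + 1)} {y : Fin (n + 1) → k} :
    y ∘ (Equiv.swap u v) ∈ LA (k := k) A ↔ y ∈ LA (k := k) (A.image (Equiv.swap u v)) := by
  have hsum : (∑ a, (y ∘ (Equiv.swap u v)) a) = ∑ a, y a := Equiv.sum_comp _ y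
  constructor
  · intro hy
    refine ⟨by rw [← hsum]; exact hy.1, fun p hp q hq => ?_, fun p hp q hq => ?_⟩
    · have := hy.2.1 _ (mem_image_swap.mp hp) _ (mem_image_swap.mp hq)
      simpa [Equiv.swap_apply_self] using this
    · have hp' : Equiv.swap u v p ∈ Aᶜ :=
        Finset.mem_compl.mpr fun h => Finset.mem_compl.mp hp (mem_image_swap.mpr h)
      have hq' : Equiv.swap u v q ∈ Aᶜ :=
        Finset.mem_compl.mpr fun h => Finset.mem_compl.mp hq (mem_image_swap.mpr h)
      have := hy.2.2 _ hp' _ hq'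
      simpa [Equiv.swap_apply_self] using this
  · intro hy
    refine ⟨by rw [hsum]; exact hy.1, fun p hp q hq => ?_, fun p hp q hq => ?_⟩
    · exact hy.2.1 _ (mem_image_swap.mpr (by rwa [Equiv.swap_apply_self]))
        _ (mem_image_swap.mpr (by rwa [Equiv.swap_apply_self]))
    · refine hy.2.2 _ ?_ _ ?_
      · exact Finset.mem_compl.mpr fun h => Finset.mem_compl.mp hp
          (by rw [← Equiv.swap_apply_self u v p]; exact mem_image_swap.mp h)
      · exact Finset.mem_compl.mpr fun h => Finset.mem_compl.mp hq
          (by rw [← Equiv.swap_apply_self u v q]; exact mem_image_swap.mp h)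

theorem permSet_WF {P : Finset (Fin (n + 1)) → Prop} {u v : Fin (n + 1)} :
    permSet k n (Equiv.swap u v) (WF (k := k) P) =
      WF (k := k) (fun B => P (B.image (Equiv.swap u v))) := by
  ext y
  have hmem : y ∈ permSet k n (Equiv.swap u v) (WF (k := k) P) ↔
      y ∘ (Equiv.swap u v) ∈ WF (k := k) P := by
    constructor
    · rintro ⟨x, hx, rfl⟩
      have : (x ∘ ⇑(Equiv.swap u v)) ∘ ⇑(Equiv.swap u v) = x := by
        funext a; simp [Function.comp, Equiv.swap_apply_self]
      rwa [this]
    · intro h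
      refine ⟨y ∘ (Equiv.swap u v), h, ?_⟩
      funext a; simp [Function.comp, Equiv.swap_apply_self]
  rw [hmem, mem_WF, mem_WF]
  constructor
  · rintro ⟨A, hA, hxA⟩
    refine ⟨A.image (Equiv.swap u v), ?_, LA_comp_swap.mp hxA⟩
    rwa [image_swap_image_swap]
  · rintro ⟨B, hB, hxB⟩
    refine ⟨B.image (Equiv.swap u v), hB, LA_comp_swap.mpr ?_⟩
    rwa [image_swap_image_swap]

theorem sepa_image_swap {B : Finset (Fin (n + 1))} {u v : Fin (n + 1)}
    {c : Fin (n + 1) × Fin (n + 1)} :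
    sepa (B.image (Equiv.swap u v)) c ↔ sepa B (Equiv.swap u v c.1, Equiv.swap u v c.2) := by
  simp only [sepa, mem_image_swap]

/-- `V_t` for a transposition, described explicitly. -/
theorem Vt_swap_eq {u v : Fin (n + 1)} (huv : u ≠ v) :
    Vt k n (Equiv.swap u v) = WF (k := k) (fun A => sepa A (u, v)) := by
  apply Set.Subset.antisymm
  · refine Set.iUnion₂_subset fun L hL => ?_
    obtain ⟨hW, hH⟩ := hL
    obtain ⟨A, hA1, hA2, rfl⟩ := weyl_structure hW
    have hsep : sepa A (u, v) := by
      by_contra hns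
      exact hH (LA_subset_Hyp hns)
    intro x hx
    exact mem_WF.mpr ⟨A, hsep, hx⟩
  · intro x hx
    obtain ⟨A, hsep, hxA⟩ := mem_WF.mp hx
    have hA := sepa_proper hsep
    refine Set.mem_biUnion (s := {L | IsWeylLine k n L ∧ ¬L ⊆ Hyp k n (Equiv.swap u v)})
      ⟨LA_isWeylLine hA.1 hA.2, ?_⟩ hxA
    intro hsub
    have hv := hsub (vA_mem_LA (k := k) A)
    rw [mem_Hyp_swap] at hv
    exact vA_uv_ne hsep hv.2

end Dev4

section Dev5

variable {k n}

/-- Two cups have disjoint endpoints. -/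
def CupDisj (c c' : Fin (n + 1) × Fin (n + 1)) : Prop :=
  c.1 ≠ c'.1 ∧ c.1 ≠ c'.2 ∧ c.2 ≠ c'.1 ∧ c.2 ≠ c'.2

/-- A valid (partial) matching: proper cups with pairwise disjoint endpoints. -/
def ValidM (C : List (Fin (n + 1) × Fin (n + 1))) : Prop :=
  (∀ c ∈ C, c.1 ≠ c.2) ∧ C.Pairwise CupDisj

theorem validM_disj {C : List (Fin (n + 1) × Fin (n + 1))} (hC : ValidM C) :
    ∀ c ∈ C, ∀ c' ∈ C, c ≠ c' → CupDisj c c' := by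
  intro c hc c' hc' hne
  haveI : Std.Symm (CupDisj (n := n)) := ⟨fun c c' h => ⟨h.1.symm, h.2.2.1.symm, h.2.1.symm, h.2.2.2.symm⟩⟩
  exact hC.2.forall hc hc' hne

theorem validM_nodup {C : List (Fin (n + 1) × Fin (n + 1))} (hC : ValidM C) : C.Nodup :=
  hC.2.imp (fun h he => h.1 (congrArg Prod.fst he))

theorem exists_sepa_all {C : List (Fin (n + 1) × Fin (n + 1))} (hC : ValidM C) :
    ∃ A, ∀ c ∈ C, sepa A c := by
  classical
  refine ⟨(C.map Prod.fst).toFinset, fun c hc => ?_⟩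
  have h1 : c.1 ∈ (C.map Prod.fst).toFinset := by
    rw [List.mem_toFinset, List.mem_map]
    exact ⟨c, hc, rfl⟩
  have h2 : c.2 ∉ (C.map Prod.fst).toFinset := by
    rw [List.mem_toFinset, List.mem_map]
    rintro ⟨c', hc', hc'1⟩
    rcases eq_or_ne c' c with rfl | hne
    · exact hC.1 c' hc' hc'1
    · exact (validM_disj hC c' hc' c hc hne).2.1 hc'1
  exact ⟨fun _ => h2, fun _ => h1⟩

theorem iff_case_both {U V Aa Bb Rst : Prop} :
    ((U ↔ ¬V) ∧ ((Aa ↔ ¬Bb) ∧ Rst)) ↔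
    ((U ↔ ¬V) ∧ (((U ↔ ¬Aa) ∧ (V ↔ ¬Bb) ∧ Rst) ∨ ((V ↔ ¬Aa) ∧ (U ↔ ¬Bb) ∧ Rst))) := by
  by_cases U <;> by_cases V <;> by_cases Aa <;> by_cases Bb <;> tauto

theorem iff_case_single {U V Aa Rst : Prop} :
    ((U ↔ ¬V) ∧ Rst) ↔
    ((U ↔ ¬V) ∧ (((U ↔ ¬Aa) ∧ Rst) ∨ ((V ↔ ¬Aa) ∧ Rst))) := by
  by_cases U <;> by_cases V <;> by_cases Aa <;> tauto

theorem iff_case_single' {U V Bb Rst : Prop} :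
    ((U ↔ ¬V) ∧ Rst) ↔
    ((U ↔ ¬V) ∧ (((V ↔ ¬Bb) ∧ Rst) ∨ ((U ↔ ¬Bb) ∧ Rst))) := by
  by_cases U <;> by_cases V <;> by_cases Bb <;> tauto

theorem key_rule {u v : Fin (n + 1)} (huv : u ≠ v)
    {C : List (Fin (n + 1) × Fin (n + 1))} (hC : ValidM C) (hne : C ≠ []) :
    ∃ C', ValidM C' ∧ C' ≠ [] ∧ ∀ A : Finset (Fin (n + 1)),
      (∀ c ∈ C', sepa A c) ↔
      (sepa A (u, v) ∧ ((∀ c ∈ C, sepa A c) ∨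
        (∀ c ∈ C, sepa A (Equiv.swap u v c.1, Equiv.swap u v c.2)))) := by
  classical
  have hdisj := validM_disj hC
  have hnd := validM_nodup hC
  have huniq : ∀ (w : Fin (n + 1)), ∀ c ∈ C, ∀ c' ∈ C,
      (c.1 = w ∨ c.2 = w) → (c'.1 = w ∨ c'.2 = w) → c = c' := by
    intro w c hc c' hc' h h'
    by_contra hne'
    have hd := hdisj c hc c' hc' hne'
    rcases h with h | h <;> rcases h' with h' | h'
    · exact hd.1 (h.trans h'.symm)
    · exact hd.2.1 (h.trans h'.symm)
    · exact hd.2.2.1 (h.trans h'.symm)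
    · exact hd.2.2.2 (h.trans h'.symm)
  by_cases hB : ∃ c ∈ C, (c.1 = u ∨ c.1 = v) ∧ (c.2 = u ∨ c.2 = v)
  · -- a cup `(u,v)` (in some orientation) is already present
    obtain ⟨c₀, hc₀, hx1, hx2⟩ := hB
    have hc₀uv : (c₀.1 = u ∧ c₀.2 = v) ∨ (c₀.1 = v ∧ c₀.2 = u) := by
      rcases hx1 with h | h <;> rcases hx2 with h' | h'
      · exact absurd (h.trans h'.symm) (hC.1 c₀ hc₀)
      · exact Or.inl ⟨h, h'⟩
      · exact Or.inr ⟨h, h'⟩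
      · exact absurd (h.trans h'.symm) (hC.1 c₀ hc₀)
    have hother : ∀ c ∈ C, c ≠ c₀ →
        (c.1 ≠ u ∧ c.2 ≠ u ∧ c.1 ≠ v ∧ c.2 ≠ v) := by
      intro c hc hne'
      rcases hc₀uv with ⟨e1, e2⟩ | ⟨e1, e2⟩
      · exact ⟨fun h => hne' (huniq u c hc c₀ hc₀ (Or.inl h) (Or.inl e1)),
          fun h => hne' (huniq u c hc c₀ hc₀ (Or.inr h) (Or.inl e1)),
          fun h => hne' (huniq v c hc c₀ hc₀ (Or.inl h) (Or.inr e2)),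
          fun h => hne' (huniq v c hc c₀ hc₀ (Or.inr h) (Or.inr e2))⟩
      · exact ⟨fun h => hne' (huniq u c hc c₀ hc₀ (Or.inl h) (Or.inr e2)),
          fun h => hne' (huniq u c hc c₀ hc₀ (Or.inr h) (Or.inr e2)),
          fun h => hne' (huniq v c hc c₀ hc₀ (Or.inl h) (Or.inl e1)),
          fun h => hne' (huniq v c hc c₀ hc₀ (Or.inr h) (Or.inl e1))⟩
    refine ⟨C, hC, hne, fun A => ?_⟩
    constructor
    · intro h
      refine ⟨?_, Or.inl h⟩
      have h0 : c₀.1 ∈ A ↔ c₀.2 ∉ A := h c₀ hc₀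
      rcases hc₀uv with ⟨e1, e2⟩ | ⟨e1, e2⟩
      · rw [e1, e2] at h0; exact h0
      · rw [e1, e2] at h0
        show u ∈ A ↔ v ∉ A
        by_cases h1 : u ∈ A <;> by_cases h2 : v ∈ A <;> tauto
    · rintro ⟨hsep, h | h⟩
      · exact h
      · intro c hc
        by_cases hcc : c = c₀
        · subst hcc
          show c.1 ∈ A ↔ c.2 ∉ A
          have hsep' : u ∈ A ↔ v ∉ A := hsep
          rcases hc₀uv with ⟨e1, e2⟩ | ⟨e1, e2⟩
          · rw [e1, e2]; exact hsep'
          · rw [e1, e2]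
            by_cases h1 : u ∈ A <;> by_cases h2 : v ∈ A <;> tauto
        · obtain ⟨n1, n2, n3, n4⟩ := hother c hc hcc
          have h' := h c hc
          rwa [Equiv.swap_apply_of_ne_of_ne n1 n3, Equiv.swap_apply_of_ne_of_ne n2 n4] at h'
  · push_neg at hB
    by_cases hu : ∃ c ∈ C, c.1 = u ∨ c.2 = u <;>
      by_cases hv : ∃ c ∈ C, c.1 = v ∨ c.2 = v
    · -- both `u` and `v` are matched (to distinct other points)
      obtain ⟨cu, hcu, htu⟩ := hu
      obtain ⟨cv, hcv, htv⟩ := hv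
      have hcucv : cu ≠ cv := by
        rintro rfl
        rcases htu with h | h <;> rcases htv with h' | h'
        · exact huv (h.symm.trans h')
        · exact (hB cu hcu (Or.inl h)).2 h'
        · exact (hB cu hcu (Or.inr h')).1 h
        · exact huv (h.symm.trans h')
      -- extract partner of u
      obtain ⟨a, hau, hav, haend, hdtra, hiff1a, hiff2a⟩ :
          ∃ a : Fin (n + 1), a ≠ u ∧ a ≠ v ∧ (a = cu.1 ∨ a = cu.2) ∧
            (∀ c', CupDisj cu c' → a ≠ c'.1 ∧ a ≠ c'.2) ∧
            (∀ A : Finset (Fin (n + 1)), sepa A cu ↔ (u ∈ A ↔ a ∉ A)) ∧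
            (∀ A : Finset (Fin (n + 1)),
              sepa A (Equiv.swap u v cu.1, Equiv.swap u v cu.2) ↔ (v ∈ A ↔ a ∉ A)) := by
        rcases htu with h1 | h1
        · have hq1 : cu.2 ≠ u := fun h => hC.1 cu hcu (h1.trans h.symm)
          have hq2 : cu.2 ≠ v := (hB cu hcu (Or.inl h1)).2
          refine ⟨cu.2, hq1, hq2, Or.inr rfl,
            fun c' hd => ⟨hd.2.2.1, hd.2.2.2⟩, fun A => ?_, fun A => ?_⟩
          · show (cu.1 ∈ A ↔ cu.2 ∉ A) ↔ _
            rw [h1]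
          · show (Equiv.swap u v cu.1 ∈ A ↔ Equiv.swap u v cu.2 ∉ A) ↔ _
            rw [h1, Equiv.swap_apply_left, Equiv.swap_apply_of_ne_of_ne hq1 hq2]
        · have hq1 : cu.1 ≠ u := fun h => hC.1 cu hcu (h.trans h1.symm)
          have hq2 : cu.1 ≠ v := fun h => (hB cu hcu (Or.inr h)).1 h1
          refine ⟨cu.1, hq1, hq2, Or.inl rfl,
            fun c' hd => ⟨hd.1, hd.2.1⟩, fun A => ?_, fun A => ?_⟩
          · show (cu.1 ∈ A ↔ cu.2 ∉ A) ↔ _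
            rw [h1]
            by_cases h1' : cu.1 ∈ A <;> by_cases h2' : u ∈ A <;> tauto
          · show (Equiv.swap u v cu.1 ∈ A ↔ Equiv.swap u v cu.2 ∉ A) ↔ _
            rw [h1, Equiv.swap_apply_left, Equiv.swap_apply_of_ne_of_ne hq1 hq2]
            by_cases h1' : cu.1 ∈ A <;> by_cases h2' : v ∈ A <;> tauto
      -- extract partner of v
      obtain ⟨b, hbv, hbu, hbend, hdtrb, hiff1b, hiff2b⟩ :
          ∃ b : Fin (n + 1), b ≠ v ∧ b ≠ u ∧ (b = cv.1 ∨ b = cv.2) ∧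
            (∀ c', CupDisj cv c' → b ≠ c'.1 ∧ b ≠ c'.2) ∧
            (∀ A : Finset (Fin (n + 1)), sepa A cv ↔ (v ∈ A ↔ b ∉ A)) ∧
            (∀ A : Finset (Fin (n + 1)),
              sepa A (Equiv.swap u v cv.1, Equiv.swap u v cv.2) ↔ (u ∈ A ↔ b ∉ A)) := by
        rcases htv with h1 | h1
        · have hq1 : cv.2 ≠ v := fun h => hC.1 cv hcv (h1.trans h.symm)
          have hq2 : cv.2 ≠ u := (hB cv hcv (Or.inr h1)).1
          refine ⟨cv.2, hq1, hq2, Or.inr rfl,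
            fun c' hd => ⟨hd.2.2.1, hd.2.2.2⟩, fun A => ?_, fun A => ?_⟩
          · show (cv.1 ∈ A ↔ cv.2 ∉ A) ↔ _
            rw [h1]
          · show (Equiv.swap u v cv.1 ∈ A ↔ Equiv.swap u v cv.2 ∉ A) ↔ _
            rw [h1, Equiv.swap_apply_right, Equiv.swap_apply_of_ne_of_ne hq2 hq1]
        · have hq1 : cv.1 ≠ v := fun h => hC.1 cv hcv (h.trans h1.symm)
          have hq2 : cv.1 ≠ u := fun h => (hB cv hcv (Or.inl h)).2 h1
          refine ⟨cv.1, hq1, hq2, Or.inl rfl,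
            fun c' hd => ⟨hd.1, hd.2.1⟩, fun A => ?_, fun A => ?_⟩
          · show (cv.1 ∈ A ↔ cv.2 ∉ A) ↔ _
            rw [h1]
            by_cases h1' : cv.1 ∈ A <;> by_cases h2' : v ∈ A <;> tauto
          · show (Equiv.swap u v cv.1 ∈ A ↔ Equiv.swap u v cv.2 ∉ A) ↔ _
            rw [h1, Equiv.swap_apply_right, Equiv.swap_apply_of_ne_of_ne hq2 hq1]
            by_cases h1' : cv.1 ∈ A <;> by_cases h2' : u ∈ A <;> tauto
      have hab : a ≠ b := by
        have hd := hdtra cv (hdisj cu hcu cv hcv hcucv)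
        rcases hbend with h | h
        · exact h ▸ hd.1
        · exact h ▸ hd.2
      set R := (C.erase cu).erase cv with hR
      have hndR : (C.erase cu).Nodup := hnd.erase cu
      have hmemR : ∀ c, c ∈ R ↔ (c ≠ cv ∧ c ≠ cu ∧ c ∈ C) := by
        intro c
        rw [hR, List.Nodup.mem_erase_iff hndR, List.Nodup.mem_erase_iff hnd]
      have hcvR : cv ∈ C.erase cu := (List.Nodup.mem_erase_iff hnd).mpr ⟨hcucv.symm, hcv⟩
      have hRsub : ∀ c ∈ R, c ∈ C := fun c hc => ((hmemR c).mp hc).2.2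
      have hsplit : ∀ P : Fin (n + 1) × Fin (n + 1) → Prop,
          (∀ c ∈ C, P c) ↔ (P cu ∧ P cv ∧ ∀ c ∈ R, P c) := by
        intro P
        constructor
        · intro h
          exact ⟨h cu hcu, h cv hcv, fun c hc => h c (hRsub c hc)⟩
        · rintro ⟨h1, h2, h3⟩ c hc
          by_cases hc1 : c = cu
          · exact hc1 ▸ h1
          by_cases hc2 : c = cv
          · exact hc2 ▸ h2
          · exact h3 c ((hmemR c).mpr ⟨hc2, hc1, hc⟩)
      have huntouch : ∀ c ∈ R,
          (Equiv.swap u v c.1, Equiv.swap u v c.2) = c := by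
        intro c hc
        obtain ⟨hc2, hc1, hcC⟩ := (hmemR c).mp hc
        have n1 : c.1 ≠ u := fun h => hc1 (huniq u c hcC cu hcu (Or.inl h) htu)
        have n2 : c.2 ≠ u := fun h => hc1 (huniq u c hcC cu hcu (Or.inr h) htu)
        have n3 : c.1 ≠ v := fun h => hc2 (huniq v c hcC cv hcv (Or.inl h) htv)
        have n4 : c.2 ≠ v := fun h => hc2 (huniq v c hcC cv hcv (Or.inr h) htv)
        rw [Equiv.swap_apply_of_ne_of_ne n1 n3, Equiv.swap_apply_of_ne_of_ne n2 n4]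
      refine ⟨(u, v) :: (a, b) :: R, ⟨?_, ?_⟩, by simp, fun A => ?_⟩
      · intro c hc
        simp only [List.mem_cons] at hc
        rcases hc with rfl | rfl | hc
        · exact huv
        · exact hab
        · exact hC.1 c (hRsub c hc)
      · rw [List.pairwise_cons, List.pairwise_cons]
        refine ⟨?_, ⟨?_, ?_⟩⟩
        · intro c hc
          simp only [List.mem_cons] at hc
          rcases hc with rfl | hc
          · exact ⟨hau.symm, hbu.symm, hav.symm, hbv.symm⟩
          · obtain ⟨hc2, hc1, hcC⟩ := (hmemR c).mp hc
            have n1 : c.1 ≠ u := fun h => hc1 (huniq u c hcC cu hcu (Or.inl h) htu)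
            have n2 : c.2 ≠ u := fun h => hc1 (huniq u c hcC cu hcu (Or.inr h) htu)
            have n3 : c.1 ≠ v := fun h => hc2 (huniq v c hcC cv hcv (Or.inl h) htv)
            have n4 : c.2 ≠ v := fun h => hc2 (huniq v c hcC cv hcv (Or.inr h) htv)
            exact ⟨n1.symm, n2.symm, n3.symm, n4.symm⟩
        · intro c hc
          obtain ⟨hc2, hc1, hcC⟩ := (hmemR c).mp hc
          have hda := hdtra c (hdisj cu hcu c hcC (fun h => hc1 h.symm))
          have hdb := hdtrb c (hdisj cv hcv c hcC (fun h => hc2 h.symm))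
          exact ⟨hda.1, hda.2, hdb.1, hdb.2⟩
        · exact (hC.2.sublist List.erase_sublist).sublist List.erase_sublist
      · have hmapR : (∀ c ∈ R, sepa A (Equiv.swap u v c.1, Equiv.swap u v c.2)) ↔
            (∀ c ∈ R, sepa A c) := by
          refine forall₂_congr fun c hc => ?_
          rw [huntouch c hc]
        simp only [List.forall_mem_cons, hsplit (fun c => sepa A c),
          hsplit (fun c => sepa A (Equiv.swap u v c.1, Equiv.swap u v c.2)),
          hmapR, hiff1a A, hiff2a A, hiff1b A, hiff2b A]
        simp only [sepa]
        exact iff_case_both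
    · -- only `u` is matched
      obtain ⟨cu, hcu, htu⟩ := hu
      push_neg at hv
      obtain ⟨a, hau, hav, _, _, hiff1a, hiff2a⟩ :
          ∃ a : Fin (n + 1), a ≠ u ∧ a ≠ v ∧ (a = cu.1 ∨ a = cu.2) ∧
            (∀ c', CupDisj cu c' → a ≠ c'.1 ∧ a ≠ c'.2) ∧
            (∀ A : Finset (Fin (n + 1)), sepa A cu ↔ (u ∈ A ↔ a ∉ A)) ∧
            (∀ A : Finset (Fin (n + 1)),
              sepa A (Equiv.swap u v cu.1, Equiv.swap u v cu.2) ↔ (v ∈ A ↔ a ∉ A)) := by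
        rcases htu with h1 | h1
        · have hq1 : cu.2 ≠ u := fun h => hC.1 cu hcu (h1.trans h.symm)
          have hq2 : cu.2 ≠ v := (hv cu hcu).2
          refine ⟨cu.2, hq1, hq2, Or.inr rfl,
            fun c' hd => ⟨hd.2.2.1, hd.2.2.2⟩, fun A => ?_, fun A => ?_⟩
          · show (cu.1 ∈ A ↔ cu.2 ∉ A) ↔ _
            rw [h1]
          · show (Equiv.swap u v cu.1 ∈ A ↔ Equiv.swap u v cu.2 ∉ A) ↔ _
            rw [h1, Equiv.swap_apply_left, Equiv.swap_apply_of_ne_of_ne hq1 hq2]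
        · have hq1 : cu.1 ≠ u := fun h => hC.1 cu hcu (h.trans h1.symm)
          have hq2 : cu.1 ≠ v := (hv cu hcu).1
          refine ⟨cu.1, hq1, hq2, Or.inl rfl,
            fun c' hd => ⟨hd.1, hd.2.1⟩, fun A => ?_, fun A => ?_⟩
          · show (cu.1 ∈ A ↔ cu.2 ∉ A) ↔ _
            rw [h1]
            by_cases h1' : cu.1 ∈ A <;> by_cases h2' : u ∈ A <;> tauto
          · show (Equiv.swap u v cu.1 ∈ A ↔ Equiv.swap u v cu.2 ∉ A) ↔ _
            rw [h1, Equiv.swap_apply_left, Equiv.swap_apply_of_ne_of_ne hq1 hq2]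
            by_cases h1' : cu.1 ∈ A <;> by_cases h2' : v ∈ A <;> tauto
      set R := C.erase cu with hR
      have hmemR : ∀ c, c ∈ R ↔ (c ≠ cu ∧ c ∈ C) := fun c =>
        List.Nodup.mem_erase_iff hnd
      have hRsub : ∀ c ∈ R, c ∈ C := fun c hc => ((hmemR c).mp hc).2
      have hsplit : ∀ P : Fin (n + 1) × Fin (n + 1) → Prop,
          (∀ c ∈ C, P c) ↔ (P cu ∧ ∀ c ∈ R, P c) := by
        intro P
        constructor
        · intro h
          exact ⟨h cu hcu, fun c hc => h c (hRsub c hc)⟩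
        · rintro ⟨h1, h2⟩ c hc
          by_cases hc1 : c = cu
          · exact hc1 ▸ h1
          · exact h2 c ((hmemR c).mpr ⟨hc1, hc⟩)
      have hnotch : ∀ c ∈ R, c.1 ≠ u ∧ c.2 ≠ u ∧ c.1 ≠ v ∧ c.2 ≠ v := by
        intro c hc
        obtain ⟨hc1, hcC⟩ := (hmemR c).mp hc
        exact ⟨fun h => hc1 (huniq u c hcC cu hcu (Or.inl h) htu),
          fun h => hc1 (huniq u c hcC cu hcu (Or.inr h) htu),
          (hv c hcC).1, (hv c hcC).2⟩
      have huntouch : ∀ c ∈ R,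
          (Equiv.swap u v c.1, Equiv.swap u v c.2) = c := by
        intro c hc
        obtain ⟨n1, n2, n3, n4⟩ := hnotch c hc
        rw [Equiv.swap_apply_of_ne_of_ne n1 n3, Equiv.swap_apply_of_ne_of_ne n2 n4]
      refine ⟨(u, v) :: R, ⟨?_, ?_⟩, by simp, fun A => ?_⟩
      · intro c hc
        simp only [List.mem_cons] at hc
        rcases hc with rfl | hc
        · exact huv
        · exact hC.1 c (hRsub c hc)
      · rw [List.pairwise_cons]
        refine ⟨fun c hc => ?_, hC.2.sublist List.erase_sublist⟩
        obtain ⟨n1, n2, n3, n4⟩ := hnotch c hc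
        exact ⟨n1.symm, n2.symm, n3.symm, n4.symm⟩
      · have hmapR : (∀ c ∈ R, sepa A (Equiv.swap u v c.1, Equiv.swap u v c.2)) ↔
            (∀ c ∈ R, sepa A c) := by
          refine forall₂_congr fun c hc => ?_
          rw [huntouch c hc]
        simp only [List.forall_mem_cons, hsplit (fun c => sepa A c),
          hsplit (fun c => sepa A (Equiv.swap u v c.1, Equiv.swap u v c.2)),
          hmapR, hiff1a A, hiff2a A]
        simp only [sepa]
        exact iff_case_single
    · -- only `v` is matched
      obtain ⟨cv, hcv, htv⟩ := hv
      push_neg at hu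
      obtain ⟨b, hbv, hbu, _, _, hiff1b, hiff2b⟩ :
          ∃ b : Fin (n + 1), b ≠ v ∧ b ≠ u ∧ (b = cv.1 ∨ b = cv.2) ∧
            (∀ c', CupDisj cv c' → b ≠ c'.1 ∧ b ≠ c'.2) ∧
            (∀ A : Finset (Fin (n + 1)), sepa A cv ↔ (v ∈ A ↔ b ∉ A)) ∧
            (∀ A : Finset (Fin (n + 1)),
              sepa A (Equiv.swap u v cv.1, Equiv.swap u v cv.2) ↔ (u ∈ A ↔ b ∉ A)) := by
        rcases htv with h1 | h1
        · have hq1 : cv.2 ≠ v := fun h => hC.1 cv hcv (h1.trans h.symm)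
          have hq2 : cv.2 ≠ u := (hu cv hcv).2
          refine ⟨cv.2, hq1, hq2, Or.inr rfl,
            fun c' hd => ⟨hd.2.2.1, hd.2.2.2⟩, fun A => ?_, fun A => ?_⟩
          · show (cv.1 ∈ A ↔ cv.2 ∉ A) ↔ _
            rw [h1]
          · show (Equiv.swap u v cv.1 ∈ A ↔ Equiv.swap u v cv.2 ∉ A) ↔ _
            rw [h1, Equiv.swap_apply_right, Equiv.swap_apply_of_ne_of_ne hq2 hq1]
        · have hq1 : cv.1 ≠ v := fun h => hC.1 cv hcv (h.trans h1.symm)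
          have hq2 : cv.1 ≠ u := (hu cv hcv).1
          refine ⟨cv.1, hq1, hq2, Or.inl rfl,
            fun c' hd => ⟨hd.1, hd.2.1⟩, fun A => ?_, fun A => ?_⟩
          · show (cv.1 ∈ A ↔ cv.2 ∉ A) ↔ _
            rw [h1]
            by_cases h1' : cv.1 ∈ A <;> by_cases h2' : v ∈ A <;> tauto
          · show (Equiv.swap u v cv.1 ∈ A ↔ Equiv.swap u v cv.2 ∉ A) ↔ _
            rw [h1, Equiv.swap_apply_right, Equiv.swap_apply_of_ne_of_ne hq2 hq1]
            by_cases h1' : cv.1 ∈ A <;> by_cases h2' : u ∈ A <;> tauto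
      set R := C.erase cv with hR
      have hmemR : ∀ c, c ∈ R ↔ (c ≠ cv ∧ c ∈ C) := fun c =>
        List.Nodup.mem_erase_iff hnd
      have hRsub : ∀ c ∈ R, c ∈ C := fun c hc => ((hmemR c).mp hc).2
      have hsplit : ∀ P : Fin (n + 1) × Fin (n + 1) → Prop,
          (∀ c ∈ C, P c) ↔ (P cv ∧ ∀ c ∈ R, P c) := by
        intro P
        constructor
        · intro h
          exact ⟨h cv hcv, fun c hc => h c (hRsub c hc)⟩
        · rintro ⟨h1, h2⟩ c hc
          by_cases hc1 : c = cv
          · exact hc1 ▸ h1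
          · exact h2 c ((hmemR c).mpr ⟨hc1, hc⟩)
      have hnotch : ∀ c ∈ R, c.1 ≠ u ∧ c.2 ≠ u ∧ c.1 ≠ v ∧ c.2 ≠ v := by
        intro c hc
        obtain ⟨hc1, hcC⟩ := (hmemR c).mp hc
        exact ⟨(hu c hcC).1, (hu c hcC).2,
          fun h => hc1 (huniq v c hcC cv hcv (Or.inl h) htv),
          fun h => hc1 (huniq v c hcC cv hcv (Or.inr h) htv)⟩
      have huntouch : ∀ c ∈ R,
          (Equiv.swap u v c.1, Equiv.swap u v c.2) = c := by
        intro c hc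
        obtain ⟨n1, n2, n3, n4⟩ := hnotch c hc
        rw [Equiv.swap_apply_of_ne_of_ne n1 n3, Equiv.swap_apply_of_ne_of_ne n2 n4]
      refine ⟨(u, v) :: R, ⟨?_, ?_⟩, by simp, fun A => ?_⟩
      · intro c hc
        simp only [List.mem_cons] at hc
        rcases hc with rfl | hc
        · exact huv
        · exact hC.1 c (hRsub c hc)
      · rw [List.pairwise_cons]
        refine ⟨fun c hc => ?_, hC.2.sublist List.erase_sublist⟩
        obtain ⟨n1, n2, n3, n4⟩ := hnotch c hc
        exact ⟨n1.symm, n2.symm, n3.symm, n4.symm⟩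
      · have hmapR : (∀ c ∈ R, sepa A (Equiv.swap u v c.1, Equiv.swap u v c.2)) ↔
            (∀ c ∈ R, sepa A c) := by
          refine forall₂_congr fun c hc => ?_
          rw [huntouch c hc]
        simp only [List.forall_mem_cons, hsplit (fun c => sepa A c),
          hsplit (fun c => sepa A (Equiv.swap u v c.1, Equiv.swap u v c.2)),
          hmapR, hiff1b A, hiff2b A]
        simp only [sepa]
        exact iff_case_single'
    · -- neither `u` nor `v` is matched
      push_neg at hu hv
      have huntouch : ∀ c ∈ C,
          (Equiv.swap u v c.1, Equiv.swap u v c.2) = c := by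
        intro c hc
        rw [Equiv.swap_apply_of_ne_of_ne (hu c hc).1 (hv c hc).1,
          Equiv.swap_apply_of_ne_of_ne (hu c hc).2 (hv c hc).2]
      refine ⟨(u, v) :: C, ⟨?_, ?_⟩, by simp, fun A => ?_⟩
      · intro c hc
        simp only [List.mem_cons] at hc
        rcases hc with rfl | hc
        · exact huv
        · exact hC.1 c hc
      · rw [List.pairwise_cons]
        refine ⟨fun c hc => ?_, hC.2⟩
        exact ⟨(hu c hc).1.symm, (hu c hc).2.symm, (hv c hc).1.symm, (hv c hc).2.symm⟩
      · have hmapC : (∀ c ∈ C, sepa A (Equiv.swap u v c.1, Equiv.swap u v c.2)) ↔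
            (∀ c ∈ C, sepa A c) := by
          refine forall₂_congr fun c hc => ?_
          rw [huntouch c hc]
        simp only [List.forall_mem_cons, hmapC]
        tauto

end Dev5

section Dev6

variable {k n}

theorem fin_cast_ne {j : ℕ} (hj : j < n) :
    ((j : ℕ) : Fin (n + 1)) ≠ (((j + 1 : ℕ)) : Fin (n + 1)) := by
  have h1 : (((j : ℕ)) : Fin (n + 1)).val = j := by
    rw [Fin.val_natCast]; exact Nat.mod_eq_of_lt (by omega)
  have h2 : ((((j + 1) : ℕ)) : Fin (n + 1)).val = j + 1 := by
    rw [Fin.val_natCast]; exact Nat.mod_eq_of_lt (by omega)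
  intro h
  rw [Fin.ext_iff, h1, h2] at h
  omega

theorem Vi_eq {j : ℕ} (hj : j < n) :
    Vi k n j = WF (k := k) (fun A => sepa A ((j : Fin (n + 1)), ((j + 1 : ℕ) : Fin (n + 1)))) := by
  show Vt k n (Equiv.swap ((j : ℕ) : Fin (n + 1)) (((j + 1 : ℕ)) : Fin (n + 1))) = _
  rw [Vt_swap_eq (fin_cast_ne hj)]

theorem seqSet_struct : ∀ l : List ℕ, l ≠ [] → (∀ j ∈ l, j < n) →
    ∃ C, ValidM C ∧ C ≠ [] ∧
      seqSet k n l = WF (k := k) (fun A => ∀ c ∈ C, sepa A c) := by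
  intro l
  induction l with
  | nil => intro h; exact absurd rfl h
  | cons j t ih =>
    intro _ hl
    have hj : j < n := hl j (List.mem_cons_self)
    have huv := fin_cast_ne hj
    cases t with
    | nil =>
      refine ⟨[((j : Fin (n + 1)), ((j + 1 : ℕ) : Fin (n + 1)))], ⟨?_, ?_⟩, by simp, ?_⟩
      · intro c hc
        simp only [List.mem_cons, List.not_mem_nil, or_false] at hc
        subst hc
        exact huv
      · exact List.pairwise_singleton _ _
      · have h0 : seqSet k n [j] = Vi k n j := rfl
        rw [h0, Vi_eq hj]
        apply WF_congr
        intro A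
        rw [List.forall_mem_singleton]
    | cons j' t' =>
      obtain ⟨C, hCval, hCne, hCeq⟩ := ih (by simp) fun m hm => hl m (List.mem_cons_of_mem _ hm)
      obtain ⟨C', hC'val, hC'ne, hiff⟩ := key_rule huv hCval hCne
      refine ⟨C', hC'val, hC'ne, ?_⟩
      have h0 : seqSet k n (j :: j' :: t') = dotAct k n j (seqSet k n (j' :: t')) := rfl
      rw [h0, dotAct, hCeq, Vi_eq hj]
      have hsimp : simple n j =
          Equiv.swap ((j : ℕ) : Fin (n + 1)) (((j + 1 : ℕ)) : Fin (n + 1)) := rfl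
      rw [hsimp, permSet_WF, WF_union]
      obtain ⟨c₀, hc₀⟩ := List.exists_mem_of_ne_nil C hCne
      have hP : ∀ A : Finset (Fin (n + 1)),
          sepa A ((j : Fin (n + 1)), ((j + 1 : ℕ) : Fin (n + 1))) →
          A.Nonempty ∧ A ≠ Finset.univ := fun A h => sepa_proper h
      have hQ : ∀ A : Finset (Fin (n + 1)),
          ((∀ c ∈ C, sepa A c) ∨
            (∀ c ∈ C, sepa (A.image (Equiv.swap ((j : ℕ) : Fin (n + 1))
              (((j + 1 : ℕ)) : Fin (n + 1)))) c)) →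
          A.Nonempty ∧ A ≠ Finset.univ := by
        intro A h
        rcases h with h | h
        · exact sepa_proper (h c₀ hc₀)
        · exact sepa_proper (sepa_image_swap.mp (h c₀ hc₀))
      have hQc : ∀ A : Finset (Fin (n + 1)),
          ((∀ c ∈ C, sepa A c) ∨
            (∀ c ∈ C, sepa (A.image (Equiv.swap ((j : ℕ) : Fin (n + 1))
              (((j + 1 : ℕ)) : Fin (n + 1)))) c)) →
          ((∀ c ∈ C, sepa Aᶜ c) ∨
            (∀ c ∈ C, sepa (Aᶜ.image (Equiv.swap ((j : ℕ) : Fin (n + 1))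
              (((j + 1 : ℕ)) : Fin (n + 1)))) c)) := by
        intro A h
        rcases h with h | h
        · exact Or.inl fun c hc => sepa_compl.mpr (h c hc)
        · refine Or.inr fun c hc => ?_
          rw [sepa_image_swap]
          rw [sepa_compl]
          rw [← sepa_image_swap]
          exact h c hc
      have hW : ∃ A : Finset (Fin (n + 1)),
          sepa A ((j : Fin (n + 1)), ((j + 1 : ℕ) : Fin (n + 1))) ∧
          ((∀ c ∈ C, sepa A c) ∨
            (∀ c ∈ C, sepa (A.image (Equiv.swap ((j : ℕ) : Fin (n + 1))
              (((j + 1 : ℕ)) : Fin (n + 1)))) c)) := by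
        obtain ⟨A₀, hA₀⟩ := exists_sepa_all hC'val
        obtain ⟨h1, h2⟩ := (hiff A₀).mp hA₀
        refine ⟨A₀, h1, ?_⟩
        rcases h2 with h2 | h2
        · exact Or.inl h2
        · exact Or.inr fun c hc => sepa_image_swap.mpr (h2 c hc)
      rw [WF_inter hP hQ hQc hW]
      apply WF_congr
      intro A
      rw [hiff A]
      exact and_congr_right fun _ =>
        or_congr_right (forall₂_congr fun c _ => sepa_image_swap)

end Dev6

section Dev7

open MvPolynomial

variable {k n}

theorem sub_subst_mem (u v : Fin (n + 1)) (p : MvPolynomial (Fin (n + 1)) k) :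
    p - aeval (fun a => if a = u then (X v : MvPolynomial (Fin (n + 1)) k) else X a) p ∈
      Ideal.span {(X u - X v : MvPolynomial (Fin (n + 1)) k)} := by
  classical
  induction p using MvPolynomial.induction_on with
  | C a =>
      rw [aeval_C, MvPolynomial.algebraMap_eq, sub_self]
      exact Ideal.zero_mem _
  | add p q hp hq =>
      rw [map_add]
      have h : p + q -
          (aeval (fun a => if a = u then (X v : MvPolynomial (Fin (n + 1)) k) else X a) p +
           aeval (fun a => if a = u then (X v : MvPolynomial (Fin (n + 1)) k) else X a) q) =
          (p - aeval (fun a => if a = u then (X v : MvPolynomial (Fin (n + 1)) k) else X a) p) +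
          (q - aeval (fun a => if a = u then (X v : MvPolynomial (Fin (n + 1)) k) else X a) q) := by
        ring
      rw [h]
      exact Ideal.add_mem _ hp hq
  | mul_X p a hp =>
      rw [map_mul, aeval_X]
      by_cases ha : a = u
      · subst ha
        rw [if_pos rfl]
        have h : p * X a -
            aeval (fun b => if b = a then (X v : MvPolynomial (Fin (n + 1)) k) else X b) p * X v =
            (p - aeval (fun b => if b = a then (X v : MvPolynomial (Fin (n + 1)) k) else X b) p) *
              X a +
            aeval (fun b => if b = a then (X v : MvPolynomial (Fin (n + 1)) k) else X b) p *
              (X a - X v) := by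
          ring
        rw [h]
        exact Ideal.add_mem _ (Ideal.mul_mem_right _ _ hp)
          (Ideal.mul_mem_left _ _ (Ideal.subset_span (Set.mem_singleton _)))
      · rw [if_neg ha]
        have h : p * X a -
            aeval (fun b => if b = u then (X v : MvPolynomial (Fin (n + 1)) k) else X b) p * X a =
            (p - aeval (fun b => if b = u then (X v : MvPolynomial (Fin (n + 1)) k) else X b) p) *
              X a := by
          ring
        rw [h]
        exact Ideal.mul_mem_right _ _ hp

theorem X_sub_X_ne {u v : Fin (n + 1)} (huv : u ≠ v) :
    (X u - X v : MvPolynomial (Fin (n + 1)) k) ≠ 0 := by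
  intro h
  have h1 : eval (fun a => if a = u then (1 : k) else 0) ((X u : MvPolynomial (Fin (n + 1)) k) - X v) = 1 := by
    rw [map_sub, eval_X, eval_X, if_pos rfl, if_neg (Ne.symm huv), sub_zero]
  rw [h, map_zero] at h1
  exact one_ne_zero h1.symm

theorem surj_of_inv_poly (i : ℕ) (hi : i < n) (Y : Set (Fin (n + 1) → k))
    (hY : Y ⊆ Vi k n i)
    (hstab : ∀ x ∈ Vi k n i, x ∘ (simple n i) ∈ Vi k n i)
    (E₀ : MvPolynomial (Fin (n + 1)) k)
    (hE₀inv : rename (⇑(simple n i)) E₀ = E₀)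
    (hE₀ : E₀ - (X ((i : ℕ) : Fin (n + 1)) - X (((i + 1 : ℕ)) : Fin (n + 1))) ∈
      MvPolynomial.vanishingIdeal k Y) :
    Function.Surjective ((res k n hY).comp (fixedO k n i).subtype) := by
  classical
  intro h
  obtain ⟨p, hp⟩ : ∃ p, Ideal.Quotient.mk (MvPolynomial.vanishingIdeal k Y) p = h :=
    Ideal.Quotient.mk_surjective h
  set u : Fin (n + 1) := ((i : ℕ) : Fin (n + 1)) with hu
  set v : Fin (n + 1) := (((i + 1 : ℕ)) : Fin (n + 1)) with hv
  have huv : u ≠ v := fin_cast_ne hi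
  have hsu : (simple n i) u = v := Equiv.swap_apply_left u v
  have hsv : (simple n i) v = u := Equiv.swap_apply_right u v
  set D : MvPolynomial (Fin (n + 1)) k := p - rename (⇑(simple n i)) p with hD
  have hφ : aeval (fun a => if a = u then (X v : MvPolynomial (Fin (n + 1)) k) else X a)
      (rename (⇑(simple n i)) p) =
      aeval (fun a => if a = u then (X v : MvPolynomial (Fin (n + 1)) k) else X a) p := by
    rw [aeval_rename]
    have hfun : ((fun a => if a = u then (X v : MvPolynomial (Fin (n + 1)) k) else X a) ∘
        ⇑(simple n i)) = (fun a => if a = u then (X v : MvPolynomial (Fin (n + 1)) k) else X a) := by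
      funext a
      show (if (simple n i) a = u then (X v : MvPolynomial (Fin (n + 1)) k)
        else X ((simple n i) a)) = _
      rcases eq_or_ne a u with rfl | hau
      · rw [hsu, if_neg (Ne.symm huv), if_pos rfl]
      rcases eq_or_ne a v with rfl | hav
      · rw [hsv, if_pos rfl, if_neg (Ne.symm huv)]
      · rw [show (simple n i) a = a from Equiv.swap_apply_of_ne_of_ne hau hav, if_neg hau]
    rw [hfun]
  have hDmem : D ∈ Ideal.span {(X u - X v : MvPolynomial (Fin (n + 1)) k)} := by
    have h1 := sub_subst_mem (k := k) u v p
    have h2 := sub_subst_mem (k := k) u v (rename (⇑(simple n i)) p)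
    rw [hφ] at h2
    have h3 : D = (p - aeval (fun a => if a = u then (X v : MvPolynomial (Fin (n + 1)) k) else X a) p) -
        (rename (⇑(simple n i)) p -
          aeval (fun a => if a = u then (X v : MvPolynomial (Fin (n + 1)) k) else X a) p) := by
      rw [hD]; ring
    rw [h3]
    exact Ideal.sub_mem _ h1 h2
  obtain ⟨G, hG⟩ := Ideal.mem_span_singleton.mp hDmem
  have hss : ⇑(simple n i) ∘ ⇑(simple n i) = id := by
    funext a; exact Equiv.swap_apply_self _ _ _
  have hRD : rename (⇑(simple n i)) D = -D := by
    rw [hD, map_sub, rename_rename, hss, rename_id, AlgHom.id_apply]; ring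
  have hRF : rename (⇑(simple n i)) ((X u : MvPolynomial (Fin (n + 1)) k) - X v) = -(X u - X v) := by
    rw [map_sub, rename_X, rename_X, hsu, hsv]; ring
  have hRG : rename (⇑(simple n i)) G = G := by
    have h5 := congrArg (rename (⇑(simple n i))) hG
    rw [hRD, map_mul, hRF, hG] at h5
    have h4 : ((X u : MvPolynomial (Fin (n + 1)) k) - X v) * rename (⇑(simple n i)) G =
        (X u - X v) * G := by
      linear_combination h5
    exact mul_left_cancel₀ (X_sub_X_ne huv) h4
  set q : MvPolynomial (Fin (n + 1)) k := p - C (2⁻¹ : k) * (D - E₀ * G) with hq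
  have h2k : (C (2⁻¹ : k) : MvPolynomial (Fin (n + 1)) k) * 2 = 1 := by
    rw [show (2 : MvPolynomial (Fin (n + 1)) k) = C (2 : k) from (map_ofNat C 2).symm,
      ← C_mul, inv_mul_cancel₀ (two_ne_zero), C_1]
  have hRq : rename (⇑(simple n i)) q = q := by
    rw [hq, map_sub, map_mul, map_sub, map_mul, rename_C, hRD, hE₀inv, hRG, hD]
    linear_combination (p - rename (⇑(simple n i)) p) * h2k
  have hqY : Ideal.Quotient.mk (MvPolynomial.vanishingIdeal k Y) q =
      Ideal.Quotient.mk (MvPolynomial.vanishingIdeal k Y) p := by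
    rw [Ideal.Quotient.eq]
    have h6 : q - p = (C (2⁻¹ : k) * G) * (E₀ - (X u - X v)) := by
      rw [hq, hG]; ring
    rw [h6]
    exact Ideal.mul_mem_left _ _ hE₀
  have hmem : (Ideal.Quotient.mk (MvPolynomial.vanishingIdeal k (Vi k n i)) q : O k n (Vi k n i)) ∈
      fixedO k n i := by
    show permO k n (simple n i) (Vi k n i) (Ideal.Quotient.mk _ q) =
      RingHom.id _ (Ideal.Quotient.mk _ q)
    rw [RingHom.id_apply, permO]
    erw [dif_pos hstab]
    refine (Ideal.Quotient.lift_mk _ _ _).trans ?_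
    exact congrArg (⇑(Ideal.Quotient.mk (MvPolynomial.vanishingIdeal k (Vi k n i)))) hRq
  refine ⟨⟨Ideal.Quotient.mk _ q, hmem⟩, ?_⟩
  rw [RingHom.comp_apply]
  show (res k n hY) (Ideal.Quotient.mk _ q) = h
  have hres : (res k n hY) (Ideal.Quotient.mk (MvPolynomial.vanishingIdeal k (Vi k n i)) q) =
      Ideal.Quotient.mk (MvPolynomial.vanishingIdeal k Y) q :=
    Ideal.Quotient.factor_mk _ q
  rw [hres, hqY, hp]

end Dev7

section Dev8

variable {k n}

theorem perm_comp_inj (σ : Equiv.Perm (Fin (n + 1))) :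
    Function.Injective (fun x : Fin (n + 1) → k => x ∘ σ) := by
  intro x y hxy
  funext a
  have := congrFun hxy (σ.symm a)
  simpa using this

theorem permSet_inter (σ : Equiv.Perm (Fin (n + 1))) (X Y : Set (Fin (n + 1) → k)) :
    permSet k n σ (X ∩ Y) = permSet k n σ X ∩ permSet k n σ Y :=
  Set.image_inter (perm_comp_inj σ)

theorem touch_unique {C : List (Fin (n + 1) × Fin (n + 1))} (hC : ValidM C)
    {w : Fin (n + 1)} {c c' : Fin (n + 1) × Fin (n + 1)} (hc : c ∈ C) (hc' : c' ∈ C)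
    (h : c.1 = w ∨ c.2 = w) (h' : c'.1 = w ∨ c'.2 = w) : c = c' := by
  by_contra hne'
  have hd := validM_disj hC c hc c' hc' hne'
  rcases h with h | h <;> rcases h' with h' | h'
  · exact hd.1 (h.trans h'.symm)
  · exact hd.2.1 (h.trans h'.symm)
  · exact hd.2.2.1 (h.trans h'.symm)
  · exact hd.2.2.2 (h.trans h'.symm)

theorem partner_extract {C : List (Fin (n + 1) × Fin (n + 1))} (hC : ValidM C)
    {w w' : Fin (n + 1)}
    {c : Fin (n + 1) × Fin (n + 1)} (hc : c ∈ C) (ht : c.1 = w ∨ c.2 = w)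
    (hnb : ∀ c' ∈ C, (c'.1 = w ∨ c'.1 = w') → (c'.2 ≠ w ∧ c'.2 ≠ w')) :
    ∃ a, a ≠ w ∧ a ≠ w' ∧ ∀ A : Finset (Fin (n + 1)), sepa A c → (a ∈ A ↔ w ∉ A) := by
  rcases ht with h1 | h1
  · refine ⟨c.2, (hnb c hc (Or.inl h1)).1, (hnb c hc (Or.inl h1)).2, fun A hA => ?_⟩
    have hA' : w ∈ A ↔ c.2 ∉ A := by rw [← h1]; exact hA
    by_cases hw : w ∈ A <;> by_cases hc2 : c.2 ∈ A <;> tauto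
  · refine ⟨c.1, fun h => hC.1 c hc (h.trans h1.symm), fun h => (hnb c hc (Or.inr h)).1 h1,
      fun A hA => ?_⟩
    have hA' : c.1 ∈ A ↔ w ∉ A := by rw [← h1]; exact hA
    exact hA'

end Dev8

/-- Let `W ∈ 𝒱_n` and `i < n` (0-indexed), and suppose `W ∩ V_i` is
not `s_i`-invariant.  Then the restriction homomorphism `O(V_i) → O(W ∩ V_i)`,
restricted to the fixed subalgebra `O(V_i)^{s_i}`, is surjective: every regular
function on `W ∩ V_i` extends to an `s_i`-invariant regular function on `V_i`. -/
theorem res_fixed_surjective_of_not_invariant (hn : 1 ≤ n)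
    (W : Set (Fin (n + 1) → k)) (hW : memVn k n W) (i : ℕ) (hi : i < n)
    (hni : permSet k n (simple n i) (W ∩ Vi k n i) ≠ W ∩ Vi k n i) :
    Function.Surjective
      ((res k n (Set.inter_subset_right : W ∩ Vi k n i ⊆ Vi k n i)).comp
        (fixedO k n i).subtype) := by
  classical
  obtain ⟨l, hl0, hlmem, hWeq⟩ := hW
  obtain ⟨C, hCval, hCne, hstruct⟩ := seqSet_struct (k := k) l hl0 hlmem
  have hWC : W = WF (k := k) (fun A => ∀ c ∈ C, sepa A c) := hWeq.trans hstruct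
  obtain ⟨c₀, hc₀⟩ := List.exists_mem_of_ne_nil C hCne
  set u : Fin (n + 1) := ((i : ℕ) : Fin (n + 1)) with hudef
  set v : Fin (n + 1) := (((i + 1 : ℕ)) : Fin (n + 1)) with hvdef
  have huv : u ≠ v := fin_cast_ne hi
  have hsu : (simple n i) u = v := Equiv.swap_apply_left u v
  have hsv : (simple n i) v = u := Equiv.swap_apply_right u v
  have hVi : Vi k n i = WF (k := k) (fun A => sepa A (u, v)) := Vi_eq hi
  have hsimp : simple n i = Equiv.swap u v := rfl
  have hViStable : permSet k n (simple n i) (Vi k n i) = Vi k n i := by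
    rw [hVi, hsimp, permSet_WF]
    apply WF_congr
    intro A
    rw [sepa_image_swap]
    show sepa A (Equiv.swap u v u, Equiv.swap u v v) ↔ _
    rw [Equiv.swap_apply_left, Equiv.swap_apply_right]
    exact sepa_symm.symm
  have hstab : ∀ x ∈ Vi k n i, x ∘ (simple n i) ∈ Vi k n i := by
    intro x hx
    have hmem : x ∘ ⇑(simple n i) ∈ permSet k n (simple n i) (Vi k n i) := ⟨x, hx, rfl⟩
    rwa [hViStable] at hmem
  by_cases hB : ∃ c ∈ C, (c.1 = u ∨ c.1 = v) ∧ (c.2 = u ∨ c.2 = v)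
  · -- a cup `(u,v)` is present: `W ∩ V_i` is stable, contradiction
    exfalso
    apply hni
    obtain ⟨cc, hcc, hx1, hx2⟩ := hB
    have hccuv : (cc.1 = u ∧ cc.2 = v) ∨ (cc.1 = v ∧ cc.2 = u) := by
      rcases hx1 with h | h <;> rcases hx2 with h' | h'
      · exact absurd (h.trans h'.symm) (hCval.1 cc hcc)
      · exact Or.inl ⟨h, h'⟩
      · exact Or.inr ⟨h, h'⟩
      · exact absurd (h.trans h'.symm) (hCval.1 cc hcc)
    have hWStable : permSet k n (simple n i) W = W := by
      rw [hWC, hsimp, permSet_WF]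
      apply WF_congr
      intro A
      refine forall₂_congr fun c hc => ?_
      rw [sepa_image_swap]
      by_cases hceq : c = cc
      · subst hceq
        simp only [sepa]
        rcases hccuv with ⟨e1, e2⟩ | ⟨e1, e2⟩ <;> rw [e1, e2] <;>
          rw [Equiv.swap_apply_left, Equiv.swap_apply_right] <;> tauto
      · have n1 : c.1 ≠ u := by
          intro h
          rcases hccuv with ⟨e1, e2⟩ | ⟨e1, e2⟩
          · exact hceq (touch_unique hCval hc hcc (Or.inl h) (Or.inl e1))
          · exact hceq (touch_unique hCval hc hcc (Or.inl h) (Or.inr e2))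
        have n2 : c.2 ≠ u := by
          intro h
          rcases hccuv with ⟨e1, e2⟩ | ⟨e1, e2⟩
          · exact hceq (touch_unique hCval hc hcc (Or.inr h) (Or.inl e1))
          · exact hceq (touch_unique hCval hc hcc (Or.inr h) (Or.inr e2))
        have n3 : c.1 ≠ v := by
          intro h
          rcases hccuv with ⟨e1, e2⟩ | ⟨e1, e2⟩
          · exact hceq (touch_unique hCval hc hcc (Or.inl h) (Or.inr e2))
          · exact hceq (touch_unique hCval hc hcc (Or.inl h) (Or.inl e1))
        have n4 : c.2 ≠ v := by
          intro h
          rcases hccuv with ⟨e1, e2⟩ | ⟨e1, e2⟩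
          · exact hceq (touch_unique hCval hc hcc (Or.inr h) (Or.inr e2))
          · exact hceq (touch_unique hCval hc hcc (Or.inr h) (Or.inl e1))
        rw [Equiv.swap_apply_of_ne_of_ne n1 n3, Equiv.swap_apply_of_ne_of_ne n2 n4]
    rw [permSet_inter, hWStable, hViStable]
  · push_neg at hB
    have hB' : ∀ c' ∈ C, (c'.1 = v ∨ c'.1 = u) → (c'.2 ≠ v ∧ c'.2 ≠ u) := by
      intro c' hc' h
      have h2 := hB c' hc' (by tauto)
      exact ⟨h2.2, h2.1⟩
    have hsepuv_of : ∀ x : Fin (n + 1) → k, x ≠ 0 →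
        ∀ A Bs : Finset (Fin (n + 1)), (∀ c ∈ C, sepa A c) → sepa Bs (u, v) →
        x ∈ LA (k := k) A → x ∈ LA (k := k) Bs → (u ∈ A ↔ v ∉ A) := by
      intro x hx0 A Bs hA hBs hxA hxB
      have hApr := sepa_proper (hA c₀ hc₀)
      have hBpr := sepa_proper hBs
      rcases LA_eq_or_compl hxA hxB hx0 hApr.1 hApr.2 hBpr.1 hBpr.2 with he | he
      · exact he ▸ hBs
      · have hc' := hBs
        rw [he] at hc'
        exact sepa_compl.mp hc'
    by_cases hu' : ∃ c ∈ C, c.1 = u ∨ c.2 = u <;>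
      by_cases hv' : ∃ c ∈ C, c.1 = v ∨ c.2 = v
    · -- both `u` and `v` matched
      obtain ⟨cu, hcu, htu⟩ := hu'
      obtain ⟨cv, hcv, htv⟩ := hv'
      obtain ⟨a, hau, hav, hsepa'⟩ := partner_extract hCval hcu htu hB
      obtain ⟨b, hbv, hbu, hsepb'⟩ := partner_extract hCval hcv htv hB'
      have hkey : ∀ x ∈ W ∩ Vi k n i, x a = x v ∧ x b = x u := by
        rintro x ⟨hxW, hxV⟩
        rw [hWC] at hxW
        rw [hVi] at hxV
        obtain ⟨A, hA, hxA⟩ := mem_WF.mp hxW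
        obtain ⟨Bs, hBs, hxB⟩ := mem_WF.mp hxV
        by_cases hx0 : x = 0
        · subst hx0; exact ⟨rfl, rfl⟩
        · have hsepuv := hsepuv_of x hx0 A Bs hA hBs hxA hxB
          have hau' : a ∈ A ↔ u ∉ A := hsepa' A (hA cu hcu)
          have hbv' : b ∈ A ↔ v ∉ A := hsepb' A (hA cv hcv)
          exact ⟨same_side_eq hxA (by tauto), same_side_eq hxA (by tauto)⟩
      have hE₀inv : MvPolynomial.rename (⇑(simple n i))
          ((MvPolynomial.X b : MvPolynomial (Fin (n + 1)) k) - MvPolynomial.X a) =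
          (MvPolynomial.X b : MvPolynomial (Fin (n + 1)) k) - MvPolynomial.X a := by
        rw [map_sub, MvPolynomial.rename_X, MvPolynomial.rename_X,
          show (simple n i) b = b from Equiv.swap_apply_of_ne_of_ne hbu hbv,
          show (simple n i) a = a from Equiv.swap_apply_of_ne_of_ne hau hav]
      have hE₀mem : (MvPolynomial.X b : MvPolynomial (Fin (n + 1)) k) - MvPolynomial.X a -
          (MvPolynomial.X u - MvPolynomial.X v) ∈
          MvPolynomial.vanishingIdeal k (W ∩ Vi k n i) := by
        rw [MvPolynomial.mem_vanishingIdeal_iff]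
        intro x hx
        obtain ⟨h1, h2⟩ := hkey x hx
        simp only [map_sub, MvPolynomial.eval_X, MvPolynomial.aeval_X]
        linear_combination h2 - h1
      exact surj_of_inv_poly i hi _ Set.inter_subset_right hstab _ hE₀inv hE₀mem
    · -- only `u` matched
      obtain ⟨cu, hcu, htu⟩ := hu'
      obtain ⟨a, hau, hav, hsepa'⟩ := partner_extract hCval hcu htu hB
      have hkey : ∀ x ∈ W ∩ Vi k n i, x a = x v := by
        rintro x ⟨hxW, hxV⟩
        rw [hWC] at hxW
        rw [hVi] at hxV
        obtain ⟨A, hA, hxA⟩ := mem_WF.mp hxW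
        obtain ⟨Bs, hBs, hxB⟩ := mem_WF.mp hxV
        by_cases hx0 : x = 0
        · subst hx0; rfl
        · have hsepuv := hsepuv_of x hx0 A Bs hA hBs hxA hxB
          have hau' : a ∈ A ↔ u ∉ A := hsepa' A (hA cu hcu)
          exact same_side_eq hxA (by tauto)
      have hE₀inv : MvPolynomial.rename (⇑(simple n i))
          ((MvPolynomial.X u : MvPolynomial (Fin (n + 1)) k) + MvPolynomial.X v -
            2 * MvPolynomial.X a) =
          (MvPolynomial.X u : MvPolynomial (Fin (n + 1)) k) + MvPolynomial.X v -
            2 * MvPolynomial.X a := by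
        rw [map_sub, map_add, map_mul, MvPolynomial.rename_X, MvPolynomial.rename_X,
          MvPolynomial.rename_X, hsu, hsv,
          show (simple n i) a = a from Equiv.swap_apply_of_ne_of_ne hau hav, map_ofNat]
        ring
      have hE₀mem : (MvPolynomial.X u : MvPolynomial (Fin (n + 1)) k) + MvPolynomial.X v -
          2 * MvPolynomial.X a - (MvPolynomial.X u - MvPolynomial.X v) ∈
          MvPolynomial.vanishingIdeal k (W ∩ Vi k n i) := by
        rw [MvPolynomial.mem_vanishingIdeal_iff]
        intro x hx
        have h1 := hkey x hx
        simp only [map_sub, map_add, map_mul, MvPolynomial.eval_X, MvPolynomial.aeval_X, map_ofNat]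
        linear_combination (-2 : k) * h1
      exact surj_of_inv_poly i hi _ Set.inter_subset_right hstab _ hE₀inv hE₀mem
    · -- only `v` matched
      obtain ⟨cv, hcv, htv⟩ := hv'
      obtain ⟨b, hbv, hbu, hsepb'⟩ := partner_extract hCval hcv htv hB'
      have hkey : ∀ x ∈ W ∩ Vi k n i, x b = x u := by
        rintro x ⟨hxW, hxV⟩
        rw [hWC] at hxW
        rw [hVi] at hxV
        obtain ⟨A, hA, hxA⟩ := mem_WF.mp hxW
        obtain ⟨Bs, hBs, hxB⟩ := mem_WF.mp hxV
        by_cases hx0 : x = 0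
        · subst hx0; rfl
        · have hsepuv := hsepuv_of x hx0 A Bs hA hBs hxA hxB
          have hbv' : b ∈ A ↔ v ∉ A := hsepb' A (hA cv hcv)
          exact same_side_eq hxA (by tauto)
      have hE₀inv : MvPolynomial.rename (⇑(simple n i))
          (2 * (MvPolynomial.X b : MvPolynomial (Fin (n + 1)) k) - MvPolynomial.X u -
            MvPolynomial.X v) =
          2 * (MvPolynomial.X b : MvPolynomial (Fin (n + 1)) k) - MvPolynomial.X u -
            MvPolynomial.X v := by
        rw [map_sub, map_sub, map_mul, MvPolynomial.rename_X, MvPolynomial.rename_X,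
          MvPolynomial.rename_X, hsu, hsv,
          show (simple n i) b = b from Equiv.swap_apply_of_ne_of_ne hbu hbv, map_ofNat]
        ring
      have hE₀mem : 2 * (MvPolynomial.X b : MvPolynomial (Fin (n + 1)) k) - MvPolynomial.X u -
          MvPolynomial.X v - (MvPolynomial.X u - MvPolynomial.X v) ∈
          MvPolynomial.vanishingIdeal k (W ∩ Vi k n i) := by
        rw [MvPolynomial.mem_vanishingIdeal_iff]
        intro x hx
        have h1 := hkey x hx
        simp only [map_sub, map_mul, MvPolynomial.eval_X, MvPolynomial.aeval_X, map_ofNat]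
        linear_combination (2 : k) * h1
      exact surj_of_inv_poly i hi _ Set.inter_subset_right hstab _ hE₀inv hE₀mem
    · -- neither matched: stable, contradiction
      push_neg at hu' hv'
      exfalso
      apply hni
      have hWStable : permSet k n (simple n i) W = W := by
        rw [hWC, hsimp, permSet_WF]
        apply WF_congr
        intro A
        refine forall₂_congr fun c hc => ?_
        rw [sepa_image_swap]
        rw [Equiv.swap_apply_of_ne_of_ne (hu' c hc).1 (hv' c hc).1,
          Equiv.swap_apply_of_ne_of_ne (hu' c hc).2 (hv' c hc).2]
      rw [permSet_inter, hWStable, hViStable]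

end TLpaper
end

section
/- For every 1 ≤ i ≤ n, the pair (1, f_i) is a basis of O(V_i) as a module over its fixed subalgebra O(V_i)^{s_i} (i.e., O(V_i) = O(V_i)^{s_i} ⊕ O(V_i)^{s_i}·f_i, free of rank 2). Consequently the bimodule B_i := O(V_i) ⊗_{O(V_i)^{s_i}} O(V_i) is free of rank 2 as a left O(V_i)-module and free of rank 2 as a right O(V_i)-module. -/
set_option maxRecDepth 10000


/-! Basic setup: type A_n geometric representation, Weyl lines, combinatorics. -/

set_option linter.unusedSectionVars false
set_option synthInstance.maxHeartbeats 1000000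
set_option maxHeartbeats 1000000

namespace TLpaper

variable (k : Type) [Field k] [CharZero k] (n : ℕ)

open Fin.NatCast

open scoped TensorProduct

/-- `S` is free of rank `m` as a module over `R`, the action being through the ring
homomorphism `f : R →+* S` (i.e. `r • x := f r * x`): there is a basis of size `m`. -/
def FreeRankVia {R S : Type} [CommRing R] [CommRing S] (f : R →+* S) (m : ℕ) : Prop :=
  ∃ b : Fin m → S, ∀ x : S, ∃! c : Fin m → R, x = ∑ j, f (c j) * b j

section Aux

open MvPolynomial

theorem comp_mem_Hyp_iff (σ t : Equiv.Perm (Fin (n + 1))) (x : Fin (n + 1) → k) :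
    x ∘ ⇑σ ∈ Hyp k n t ↔ x ∈ Hyp k n (σ * t * σ⁻¹) := by
  simp only [Hyp, Set.mem_setOf_eq, Function.comp_apply]
  constructor
  · rintro ⟨h1, h2⟩
    refine ⟨by rwa [Equiv.sum_comp σ x] at h1, fun j => ?_⟩
    have := h2 (σ⁻¹ j)
    simpa [Equiv.Perm.mul_apply] using this
  · rintro ⟨h1, h2⟩
    refine ⟨by rwa [Equiv.sum_comp σ x], fun j => ?_⟩
    have := h2 (σ j)
    simpa [Equiv.Perm.mul_apply] using this

theorem Vi_stable (i : ℕ) : ∀ x ∈ Vi k n i, x ∘ ⇑(simple n i) ∈ Vi k n i := by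
  intro x hx
  set s := simple n i with hs
  obtain ⟨L, ⟨⟨⟨v, hv, hLr⟩, T, hT, hLe⟩, hns⟩, hxL⟩ := Set.mem_iUnion₂.1 hx
  have hss : ⇑s ∘ ⇑s = id := by
    funext j; simp [hs, simple, Equiv.swap_apply_self]
  have hssj : ∀ j, s (s j) = j := fun j => by simpa using congrFun hss j
  have hsum : ∀ z : Fin (n + 1) → k, ∑ j, (z ∘ ⇑s) j = ∑ j, z j := fun z => Equiv.sum_comp s z
  set L' : Set (Fin (n + 1) → k) := (fun y => y ∘ ⇑s) '' L with hL'
  have hmem' : ∀ y, y ∈ L' ↔ y ∘ ⇑s ∈ L := by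
    intro y
    constructor
    · rintro ⟨z, hz, rfl⟩
      simpa [Function.comp_assoc, hss] using hz
    · intro h
      exact ⟨y ∘ ⇑s, h, by simp [Function.comp_assoc, hss]⟩
  refine Set.mem_iUnion₂.2 ⟨L', ⟨⟨⟨v ∘ ⇑s, ?_, ?_⟩, (fun t => s * t * s⁻¹) '' T, ?_, ?_⟩, ?_⟩, ?_⟩
  · intro h0
    apply hv
    funext j
    have := congrFun h0 (s j)
    simpa [Function.comp_apply, hssj j] using this
  · ext y
    rw [hmem' y, hLr]
    simp only [Set.mem_range]
    constructor
    · rintro ⟨c, hc⟩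
      refine ⟨c, ?_⟩
      funext j
      have h := congrFun hc (s j)
      simp only [Pi.smul_apply, smul_eq_mul, Function.comp_apply, hssj j] at h ⊢
      exact h
    · rintro ⟨c, hc⟩
      refine ⟨c, funext fun j => ?_⟩
      have h := congrFun hc (s j)
      simp only [Pi.smul_apply, smul_eq_mul, Function.comp_apply, hssj j] at h ⊢
      exact h
  · rintro t' ⟨t, ht, rfl⟩
    obtain ⟨a, b, hab, rfl⟩ := hT t ht
    exact ⟨s a, s b, fun h => hab (s.injective h), (Equiv.swap_apply_apply s a b).symm⟩
  · ext y
    rw [hmem' y, hLe]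
    simp only [Set.mem_inter_iff, Set.mem_setOf_eq, Set.mem_iInter]
    constructor
    · rintro ⟨h1, h2⟩
      refine ⟨by rw [← hsum y]; exact h1, fun t' => ?_⟩
      simp only [Set.mem_image]
      rintro ⟨t, ht, rfl⟩
      exact (comp_mem_Hyp_iff k n s t y).1 (h2 t ht)
    · rintro ⟨h1, h2⟩
      refine ⟨by rw [hsum y]; exact h1, fun t ht => ?_⟩
      exact (comp_mem_Hyp_iff k n s t y).2 (h2 (s * t * s⁻¹) ⟨t, ht, rfl⟩)
  · intro hsub
    apply hns
    intro z hz
    have hz' : z ∘ ⇑s ∈ L' := (hmem' (z ∘ ⇑s)).2 (by simpa [Function.comp_assoc, hss] using hz)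
    obtain ⟨h1, h2⟩ := hsub hz'
    refine ⟨by rw [← hsum z]; exact h1, fun j => ?_⟩
    have h3 := h2 j
    rw [← hs] at h3
    simp only [Function.comp_apply, hssj j] at h3
    exact h3.symm
  · exact (hmem' (x ∘ ⇑s)).2 (by simpa [Function.comp_assoc, hss] using hxL)

end Aux
theorem fin_ne (i : ℕ) (hi : i < n) :
    ((i : Fin (n + 1)) : Fin (n + 1)) ≠ ((i + 1 : ℕ) : Fin (n + 1)) := by
  have h1 : ((i : Fin (n + 1)) : ℕ) = i := Fin.val_cast_of_lt (by omega)
  have h2 : (((i + 1 : ℕ) : Fin (n + 1)) : ℕ) = i + 1 := Fin.val_cast_of_lt (by omega)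
  intro h
  have := congrArg Fin.val h
  omega

/-- Every point of `V_i` lies on a line `k • v` contained in `V_i` with
`v i ≠ v (i+1)`. -/
theorem line_structure (i : ℕ) (hi : i < n) :
    ∀ x ∈ Vi k n i, ∃ v : Fin (n + 1) → k, v (i : Fin (n + 1)) ≠ v ((i + 1 : ℕ) : Fin (n + 1)) ∧
      (∃ c : k, x = c • v) ∧ ∀ c : k, c • v ∈ Vi k n i := by
  intro x hx
  set s := simple n i with hs
  obtain ⟨L, ⟨⟨⟨v, hv, hLr⟩, T, hT, hLe⟩, hns⟩, hxL⟩ := Set.mem_iUnion₂.1 hx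
  have hLsub : L ⊆ Vi k n i :=
    Set.subset_iUnion₂ (s := fun L _ => L) L ⟨⟨⟨v, hv, hLr⟩, T, hT, hLe⟩, hns⟩
  have hmemL : ∀ c : k, c • v ∈ L := by
    intro c; rw [hLr]; exact ⟨c, rfl⟩
  obtain ⟨y, hyL, hyH⟩ := Set.not_subset.1 hns
  obtain ⟨c₁, hc₁⟩ : ∃ c₁ : k, c₁ • v = y := by rw [hLr] at hyL; exact hyL
  have hysum : (∑ j, y j) = 0 := by
    rw [hLe] at hyL; exact hyL.1
  have hyne : y (i : Fin (n + 1)) ≠ y ((i + 1 : ℕ) : Fin (n + 1)) := by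
    intro heq
    apply hyH
    refine ⟨hysum, fun j => ?_⟩
    by_cases h1 : j = (i : Fin (n + 1))
    · subst h1; simp only [simple, Equiv.swap_apply_left]; exact heq.symm
    · by_cases h2 : j = ((i + 1 : ℕ) : Fin (n + 1))
      · subst h2; simp only [simple, Equiv.swap_apply_right]; exact heq
      · simp only [simple, Equiv.swap_apply_of_ne_of_ne h1 h2]
  have hc₁0 : c₁ ≠ 0 := by
    rintro rfl
    rw [zero_smul] at hc₁
    exact hyne (by rw [← hc₁]; simp)
  have hvne : v (i : Fin (n + 1)) ≠ v ((i + 1 : ℕ) : Fin (n + 1)) := by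
    intro heq
    apply hyne
    rw [← hc₁]
    simp [Pi.smul_apply, heq]
  refine ⟨v, hvne, ?_, fun c => hLsub (hmemL c)⟩
  rw [hLr] at hxL
  obtain ⟨c, hc⟩ := hxL
  exact ⟨c, hc.symm⟩

open MvPolynomial in
/-- `f_i` is a non-zero-divisor modulo the vanishing ideal of `V_i`. -/
theorem fpoly_regular (i : ℕ) (hi : i < n)
    (g : MvPolynomial (Fin (n + 1)) k)
    (hg : (X (i : Fin (n + 1)) - X ((i + 1 : ℕ) : Fin (n + 1))) * g ∈
      vanishingIdeal k (Vi k n i)) :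
    g ∈ vanishingIdeal k (Vi k n i) := by
  rw [mem_vanishingIdeal_iff] at hg ⊢
  simp only [MvPolynomial.aeval_eq_eval] at hg ⊢
  intro x hx
  obtain ⟨v, hvne, ⟨c₀, rfl⟩, hline⟩ := line_structure k n i hi x hx
  -- one-variable polynomial q(t) = g(t • v)
  have key : ∀ c : k, (Polynomial.evalRingHom c).comp
        (MvPolynomial.aeval (fun j => Polynomial.C (v j) * Polynomial.X :
          Fin (n + 1) → Polynomial k)).toRingHom
      = (MvPolynomial.eval (c • v) : MvPolynomial (Fin (n + 1)) k →+* k) := by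
    intro c
    apply MvPolynomial.ringHom_ext
    · intro a
      simp only [RingHom.comp_apply, Polynomial.coe_evalRingHom, AlgHom.toRingHom_eq_coe, AlgHom.coe_toRingHom, RingHom.coe_coe, MvPolynomial.aeval_C,
        MvPolynomial.eval_C, Polynomial.algebraMap_eq, Polynomial.eval_C]
    · intro j
      simp only [RingHom.comp_apply, Polynomial.coe_evalRingHom, AlgHom.toRingHom_eq_coe, AlgHom.coe_toRingHom, RingHom.coe_coe, MvPolynomial.aeval_X,
        MvPolynomial.eval_X, Polynomial.eval_mul, Polynomial.eval_C, Polynomial.eval_X,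
        Pi.smul_apply, smul_eq_mul, mul_comm]
  set q : Polynomial k := MvPolynomial.aeval
    (fun j => Polynomial.C (v j) * Polynomial.X : Fin (n + 1) → Polynomial k) g with hq
  have hqeval : ∀ c : k, q.eval c = MvPolynomial.eval (c • v) g := fun c =>
    RingHom.congr_fun (key c) g
  have hroot : ∀ c : k, c ≠ 0 → q.eval c = 0 := by
    intro c hc
    have h0 := hg (c • v) (hline c)
    rw [map_mul] at h0
    have hf : MvPolynomial.eval (c • v)
        (X (i : Fin (n + 1)) - X ((i + 1 : ℕ) : Fin (n + 1))) =
        c * (v (i : Fin (n + 1)) - v ((i + 1 : ℕ) : Fin (n + 1))) := by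
      simp [Pi.smul_apply, smul_eq_mul, mul_sub]
    rw [hf] at h0
    have hne : c * (v (i : Fin (n + 1)) - v ((i + 1 : ℕ) : Fin (n + 1))) ≠ 0 :=
      mul_ne_zero hc (sub_ne_zero.2 hvne)
    rw [hqeval c]
    exact (mul_eq_zero.1 h0).resolve_left hne
  have hq0 : q = 0 := by
    apply Polynomial.eq_zero_of_infinite_isRoot
    apply Set.Infinite.mono (s := {c : k | c ≠ 0})
    · intro c hc
      exact hroot c hc
    · exact Set.Finite.infinite_compl (Set.finite_singleton 0)
  rw [← hqeval c₀, hq0, Polynomial.eval_zero]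
open MvPolynomial in
theorem simple_comp_self (i : ℕ) : ⇑(simple n i) ∘ ⇑(simple n i) = id := by
  funext j; simp [simple, Equiv.swap_apply_self]

open MvPolynomial in
theorem anti_dvd (i : ℕ) (hi : i < n) (q : MvPolynomial (Fin (n + 1)) k)
    (hq : rename ⇑(simple n i) q = -q) :
    ∃ h : MvPolynomial (Fin (n + 1)) k,
      q = (X (i : Fin (n + 1)) - X ((i + 1 : ℕ) : Fin (n + 1))) * h ∧
        rename ⇑(simple n i) h = h := by
  set a : Fin (n + 1) := (i : Fin (n + 1)) with ha
  set b : Fin (n + 1) := ((i + 1 : ℕ) : Fin (n + 1)) with hb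
  have hab : a ≠ b := fin_ne n i hi
  set s := simple n i with hs
  have hsa : s a = b := Equiv.swap_apply_left _ _
  have hsb : s b = a := Equiv.swap_apply_right _ _
  set fp : MvPolynomial (Fin (n + 1)) k := X a - X b with hfp
  have hfp0 : fp ≠ 0 := sub_ne_zero.2 (fun h => hab (X_injective h))
  set g : Fin (n + 1) → MvPolynomial (Fin (n + 1)) k :=
    fun j => if j = b then X a else X j with hg
  have hgs : g ∘ ⇑s = g := by
    funext j
    by_cases h1 : j = a
    · subst h1; simp [hg, Function.comp_apply, hsa, hab]
    · by_cases h2 : j = b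
      · subst h2; simp [hg, Function.comp_apply, hsb, hab, Ne.symm hab]
      · simp [hg, Function.comp_apply, Equiv.swap_apply_of_ne_of_ne h1 h2, hs, simple,
          ← ha, ← hb, h1, h2]
  have haq : aeval g q = 0 := by
    have h1 : aeval g (rename ⇑s q) = aeval g q := by
      rw [aeval_rename, hgs]
    rw [hq, map_neg] at h1
    exact CharZero.neg_eq_self_iff.mp h1
  have hspan : q ∈ Ideal.span {fp} := by
    have hcong : (Ideal.Quotient.mkₐ k (Ideal.span {fp})).comp (aeval g)
        = Ideal.Quotient.mkₐ k (Ideal.span {fp}) := by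
      apply algHom_ext
      intro j
      simp only [AlgHom.comp_apply, aeval_X, Ideal.Quotient.mkₐ_eq_mk]
      by_cases h2 : j = b
      · subst h2
        have : g b = X a := by simp [hg]
        rw [this]
        refine Ideal.Quotient.eq.2 ?_
        exact Ideal.mem_span_singleton_self fp
      · have : g j = X j := by simp [hg, h2]
        rw [this]
    have := AlgHom.congr_fun hcong q
    simp only [AlgHom.comp_apply, Ideal.Quotient.mkₐ_eq_mk] at this
    rw [haq, map_zero] at this
    exact Ideal.Quotient.eq_zero_iff_mem.1 this.symm
  obtain ⟨h, hh⟩ := Ideal.mem_span_singleton.1 hspan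
  refine ⟨h, hh, ?_⟩
  have hrf : rename ⇑s fp = -fp := by
    rw [hfp, map_sub, rename_X, rename_X, hsa, hsb]
    ring
  have h1 : rename ⇑s q = -(fp * rename ⇑s h) := by
    rw [hh, map_mul, hrf]; ring
  rw [hq, hh] at h1
  exact mul_left_cancel₀ hfp0 (neg_injective h1).symm
open MvPolynomial in
theorem permO_mk (i : ℕ) (p : MvPolynomial (Fin (n + 1)) k) :
    permO k n (simple n i) (Vi k n i)
        (Ideal.Quotient.mk (vanishingIdeal k (Vi k n i)) p) =
      Ideal.Quotient.mk (vanishingIdeal k (Vi k n i)) (rename ⇑(simple n i) p) := by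
  unfold permO
  split_ifs with h
  · exact (congrArg (fun f : O k n (Vi k n i) →+* O k n (Vi k n i) => f (Ideal.Quotient.mk _ p)) (dif_pos h)).trans rfl
  · exact absurd (Vi_stable k n i) h

open MvPolynomial in
theorem part1 (i : ℕ) (hi : i < n) :
    ∀ x : O k n (Vi k n i), ∃! c : (fixedO k n i) × (fixedO k n i),
        x = ↑c.1 + ↑c.2 * fbar k n (Vi k n i) i := by
  set s := simple n i with hs
  set I := vanishingIdeal k (Vi k n i) with hI
  set mk : MvPolynomial (Fin (n + 1)) k →+* O k n (Vi k n i) :=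
    (Ideal.Quotient.mk I : MvPolynomial (Fin (n + 1)) k →+* O k n (Vi k n i)) with hmk
  set fp : MvPolynomial (Fin (n + 1)) k :=
    X (i : Fin (n + 1)) - X ((i + 1 : ℕ) : Fin (n + 1)) with hfp
  have hF : fbar k n (Vi k n i) i = mk fp := rfl
  have hPmk : ∀ p, permO k n s (Vi k n i) (mk p) = mk (rename ⇑s p) := fun p =>
    permO_mk k n i p
  have hrr : ∀ p : MvPolynomial (Fin (n + 1)) k, rename ⇑s (rename ⇑s p) = p := by
    intro p
    rw [rename_rename]
    rw [show ⇑s ∘ ⇑s = id from simple_comp_self n i]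
    simp [rename_id]
  have hhalf2 : (C (1/2 : k) : MvPolynomial (Fin (n + 1)) k) * 2 = 1 := by
    have : ((2 : MvPolynomial (Fin (n + 1)) k)) = C (2 : k) := by
      simp [map_ofNat]
    rw [this, ← C_mul]
    norm_num
  have hrf : rename ⇑s fp = -fp := by
    rw [hfp, map_sub, rename_X, rename_X]
    rw [show s ((i : Fin (n + 1))) = ((i + 1 : ℕ) : Fin (n + 1)) from Equiv.swap_apply_left _ _,
      show s (((i + 1 : ℕ) : Fin (n + 1))) = (i : Fin (n + 1)) from Equiv.swap_apply_right _ _]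
    ring
  have hPF : permO k n s (Vi k n i) (mk fp) = -(mk fp) := by
    rw [hPmk, hrf, map_neg]
  -- uniqueness of representations
  have huniq : ∀ c d : (fixedO k n i) × (fixedO k n i),
      (↑c.1 + ↑c.2 * mk fp : O k n (Vi k n i)) = ↑d.1 + ↑d.2 * mk fp → c = d := by
    intro c d heq
    have hc1 : permO k n s (Vi k n i) ↑c.1 = ↑c.1 := c.1.2
    have hc2 : permO k n s (Vi k n i) ↑c.2 = ↑c.2 := c.2.2
    have hd1 : permO k n s (Vi k n i) ↑d.1 = ↑d.1 := d.1.2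
    have hd2 : permO k n s (Vi k n i) ↑d.2 = ↑d.2 := d.2.2
    have heq2 : (↑c.1 - ↑c.2 * mk fp : O k n (Vi k n i)) = ↑d.1 - ↑d.2 * mk fp := by
      have := congrArg (permO k n s (Vi k n i)) heq
      simpa [map_add, map_mul, hc1, hc2, hd1, hd2, hPF, sub_eq_add_neg, mul_neg] using this
    have h3 : (↑c.2 * mk fp * 2 : O k n (Vi k n i)) = ↑d.2 * mk fp * 2 := by
      linear_combination heq - heq2
    have h2 : (mk (C (1/2 : k)) : O k n (Vi k n i)) * 2 = 1 := by
      rw [show ((2 : O k n (Vi k n i))) = mk 2 from (map_ofNat mk 2).symm,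
        ← map_mul, hhalf2, map_one]
    have h4 : (↑c.2 * mk fp : O k n (Vi k n i)) = ↑d.2 * mk fp := by
      linear_combination (mk (C (1/2 : k))) * h3 - ((↑c.2 : O k n (Vi k n i)) * mk fp - ↑d.2 * mk fp) * h2
    obtain ⟨g, hg⟩ := Ideal.Quotient.mk_surjective ((↑c.2 - ↑d.2 : O k n (Vi k n i)))
    have hg0 : mk (fp * g) = 0 := by
      have : (mk g : O k n (Vi k n i)) = ↑c.2 - ↑d.2 := hg
      rw [map_mul, this]
      linear_combination h4
    have hgI : fp * g ∈ I := Ideal.Quotient.eq_zero_iff_mem.1 hg0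
    have hgI2 : g ∈ I := fpoly_regular k n i hi g hgI
    have hc2d2 : (↑c.2 : O k n (Vi k n i)) = ↑d.2 := by
      have h6 : (mk g : O k n (Vi k n i)) = 0 := Ideal.Quotient.eq_zero_iff_mem.2 hgI2
      have h5 : (↑c.2 - ↑d.2 : O k n (Vi k n i)) = 0 := by rw [← hg]; exact h6
      exact sub_eq_zero.mp h5
    have hc1d1 : (↑c.1 : O k n (Vi k n i)) = ↑d.1 := by
      rw [hc2d2] at heq
      linear_combination heq
    exact Prod.ext (Subtype.ext hc1d1) (Subtype.ext hc2d2)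
  intro x
  obtain ⟨p, hp⟩ := Ideal.Quotient.mk_surjective x
  have hp' : mk p = x := hp
  set pp : MvPolynomial (Fin (n + 1)) k := C (1/2 : k) * (p + rename ⇑s p) with hpp
  set q : MvPolynomial (Fin (n + 1)) k := C (1/2 : k) * (p - rename ⇑s p) with hq
  have hqanti : rename ⇑s q = -q := by
    rw [hq, map_mul, map_sub, rename_C, hrr]
    ring
  obtain ⟨h, hh, hhinv⟩ := anti_dvd k n i hi q hqanti
  have hsplit : p = pp + fp * h := by
    rw [← hh, hpp, hq]
    have : C (1/2 : k) * (p + rename ⇑s p) + C (1/2 : k) * (p - rename ⇑s p)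
        = (C (1/2 : k) * 2) * p := by ring
    rw [this, hhalf2, one_mul]
  have hppinv : rename ⇑s pp = pp := by
    rw [hpp, map_mul, map_add, rename_C, hrr]
    ring
  have hmem1 : mk pp ∈ fixedO k n i := by
    show permO k n s (Vi k n i) (mk pp) = RingHom.id _ (mk pp)
    rw [hPmk, hppinv, RingHom.id_apply]
  have hmem2 : mk h ∈ fixedO k n i := by
    show permO k n s (Vi k n i) (mk h) = RingHom.id _ (mk h)
    rw [hPmk, hhinv, RingHom.id_apply]
  refine ⟨(⟨mk pp, hmem1⟩, ⟨mk h, hmem2⟩), ?_, ?_⟩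
  · show x = mk pp + mk h * fbar k n (Vi k n i) i
    rw [hF, ← hp', hsplit]
    push_cast [map_add, map_mul]
    ring
  · intro c hc
    refine huniq c _ ?_
    show (↑c.1 + ↑c.2 * mk fp : O k n (Vi k n i)) = ↑(⟨mk pp, hmem1⟩ : fixedO k n i) + ↑(⟨mk h, hmem2⟩ : fixedO k n i) * mk fp
    rw [← hF]
    rw [← hc]
    show x = mk pp + mk h * fbar k n (Vi k n i) i
    rw [hF, ← hp', hsplit]
    push_cast [map_add, map_mul]
    ring
section FreeTensor

open scoped TensorProduct

theorem freeTensor {S : Type} [CommRing S] (R : Subring S) (F : S)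
    (H : ∀ x : S, ∃! c : R × R, x = ↑c.1 + ↑c.2 * F) :
    FreeRankVia (Algebra.TensorProduct.includeLeftRingHom : S →+* S ⊗[R] S) 2 ∧
    FreeRankVia (Algebra.TensorProduct.includeRight.toRingHom : S →+* S ⊗[R] S) 2 := by
  classical
  have hsm : ∀ (r : R) (x : S), r • x = ↑r * x := fun r x => Algebra.smul_def r x
  set e : S → R × R := fun x => (H x).exists.choose with hedef
  have he : ∀ x, x = ↑(e x).1 + ↑(e x).2 * F := fun x => (H x).exists.choose_spec
  have hu : ∀ (x : S) (c : R × R), x = ↑c.1 + ↑c.2 * F → c = e x := fun x c hc =>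
    (H x).unique hc (he x)
  have he1 : e 1 = (1, 0) := by
    symm; rw [← hu 1 (1, 0) (by push_cast; ring)]
  have heF : e F = (0, 1) := by
    symm; rw [← hu F (0, 1) (by push_cast; ring)]
  have he_add : ∀ x y, e (x + y) = e x + e y := by
    intro x y
    symm
    apply hu
    calc x + y = (↑(e x).1 + ↑(e x).2 * F) + (↑(e y).1 + ↑(e y).2 * F) := by
          rw [← he x, ← he y]
      _ = ↑((e x + e y).1) + ↑((e x + e y).2) * F := by simp only [Prod.fst_add, Prod.snd_add]; push_cast; ring
  have he_smul : ∀ (r : R) (x : S), e (↑r * x) = r • e x := by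
    intro r x
    symm
    apply hu
    calc (↑r * x : S) = ↑r * (↑(e x).1 + ↑(e x).2 * F) := by rw [← he x]
      _ = ↑((r • e x).1) + ↑((r • e x).2) * F := by
          simp only [Prod.smul_fst, Prod.smul_snd, smul_eq_mul]
          push_cast
          ring
  -- the coordinate linear maps
  set e1 : S →ₗ[R] R :=
    { toFun := fun x => (e x).1
      map_add' := fun x y => by show (e (x + y)).1 = (e x).1 + (e y).1; rw [he_add]; rfl
      map_smul' := fun r x => by
        show (e (r • x)).1 = r • (e x).1
        rw [hsm r x, he_smul]; rfl } with he1def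
  set e2 : S →ₗ[R] R :=
    { toFun := fun x => (e x).2
      map_add' := fun x y => by show (e (x + y)).2 = (e x).2 + (e y).2; rw [he_add]; rfl
      map_smul' := fun r x => by
        show (e (r • x)).2 = r • (e x).2
        rw [hsm r x, he_smul]; rfl } with he2def
  have hmk₂ : ∀ (E : S →ₗ[R] R), ∃ π : S ⊗[R] S →ₗ[R] S,
      (∀ a b2 : S, π (a ⊗ₜ b2) = a * ↑(E b2)) := by
    intro E
    refine ⟨TensorProduct.lift (LinearMap.mk₂ R (fun x y => x * ↑(E y))
      (fun x x' y => by ring)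
      (fun r x y => by rw [hsm, hsm]; ring)
      (fun x y y' => by rw [map_add]; push_cast; ring)
      (fun r x y => by
        rw [map_smul, hsm]
        simp only [smul_eq_mul]
        push_cast
        ring)),
      fun a b2 => ?_⟩
    simp [TensorProduct.lift.tmul]
  have hmk₂' : ∀ (E : S →ₗ[R] R), ∃ π : S ⊗[R] S →ₗ[R] S,
      (∀ a b2 : S, π (a ⊗ₜ b2) = ↑(E a) * b2) := by
    intro E
    refine ⟨TensorProduct.lift (LinearMap.mk₂ R (fun x y => ↑(E x) * y)
      (fun x x' y => by rw [map_add]; push_cast; ring)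
      (fun r x y => by
        rw [map_smul, hsm]
        simp only [smul_eq_mul]
        push_cast
        ring)
      (fun x y y' => by ring)
      (fun r x y => by rw [hsm, hsm]; ring)),
      fun a b2 => ?_⟩
    simp [TensorProduct.lift.tmul]
  obtain ⟨π1, hπ1⟩ := hmk₂ e1
  obtain ⟨π2, hπ2⟩ := hmk₂ e2
  obtain ⟨π1', hπ1'⟩ := hmk₂' e1
  obtain ⟨π2', hπ2'⟩ := hmk₂' e2
  have he1F : (e1 F : S) = 0 := by rw [he1def]; show ((e F).1 : S) = 0; rw [heF]; rfl
  have he2F : (e2 F : S) = 1 := by rw [he2def]; show ((e F).2 : S) = 1; rw [heF]; rfl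
  have he11 : (e1 1 : S) = 1 := by rw [he1def]; show ((e 1).1 : S) = 1; rw [he1]; rfl
  have he21 : (e2 1 : S) = 0 := by rw [he2def]; show ((e 1).2 : S) = 0; rw [he1]; rfl
  constructor
  · -- left module structure
    refine ⟨![(1 : S) ⊗ₜ 1, (1 : S) ⊗ₜ F], fun x => ?_⟩
    have hsum : ∀ c : Fin 2 → S, (∑ j, Algebra.TensorProduct.includeLeftRingHom (c j) *
        (![(1 : S) ⊗ₜ 1, (1 : S) ⊗ₜ F] : Fin 2 → S ⊗[R] S) j) = c 0 ⊗ₜ 1 + c 1 ⊗ₜ F := by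
      intro c
      simp [Fin.sum_univ_two, Algebra.TensorProduct.includeLeftRingHom_apply,
        Algebra.TensorProduct.tmul_mul_tmul]
    have hex : ∃ c : Fin 2 → S, x = c 0 ⊗ₜ 1 + c 1 ⊗ₜ F := by
      induction x using TensorProduct.induction_on with
      | zero => exact ⟨0, by simp⟩
      | tmul a b2 =>
        refine ⟨![↑(e b2).1 * a, ↑(e b2).2 * a], ?_⟩
        simp only [Matrix.cons_val_zero, Matrix.cons_val_one, Matrix.head_cons]
        calc a ⊗ₜ[R] b2 = a ⊗ₜ[R] (↑(e b2).1 + ↑(e b2).2 * F) := by rw [← he b2]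
          _ = a ⊗ₜ ((e b2).1 • (1 : S)) + a ⊗ₜ ((e b2).2 • F) := by
              rw [TensorProduct.tmul_add]
              congr 1 <;> rw [hsm] <;> ring_nf
          _ = (↑(e b2).1 * a) ⊗ₜ 1 + (↑(e b2).2 * a) ⊗ₜ F := by
              rw [TensorProduct.tmul_smul, TensorProduct.tmul_smul,
                TensorProduct.smul_tmul', TensorProduct.smul_tmul', hsm, hsm]
      | add y z hy hz =>
        obtain ⟨cy, hcy⟩ := hy
        obtain ⟨cz, hcz⟩ := hz
        exact ⟨cy + cz, by simp only [Pi.add_apply, TensorProduct.add_tmul, hcy, hcz]; ring⟩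
    have hkey : ∀ c : Fin 2 → S, x = c 0 ⊗ₜ 1 + c 1 ⊗ₜ F → c 0 = π1 x ∧ c 1 = π2 x := by
      intro c hc
      rw [hc]
      constructor
      · rw [map_add, hπ1, hπ1, he11, he1F]; ring
      · rw [map_add, hπ2, hπ2, he21, he2F]; ring
    obtain ⟨c, hc⟩ := hex
    refine ⟨c, by dsimp only; rw [hsum]; exact hc, ?_⟩
    intro c' hc'
    rw [hsum] at hc'
    obtain ⟨h1, h2⟩ := hkey c' hc'
    obtain ⟨h1', h2'⟩ := hkey c hc
    funext j
    fin_cases j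
    · exact h1.trans h1'.symm
    · exact h2.trans h2'.symm
  · -- right module structure
    refine ⟨![(1 : S) ⊗ₜ 1, F ⊗ₜ 1], fun x => ?_⟩
    have hsum : ∀ c : Fin 2 → S, (∑ j, Algebra.TensorProduct.includeRight.toRingHom (c j) *
        (![(1 : S) ⊗ₜ 1, F ⊗ₜ (1 : S)] : Fin 2 → S ⊗[R] S) j) = 1 ⊗ₜ c 0 + F ⊗ₜ c 1 := by
      intro c
      simp [Fin.sum_univ_two, Algebra.TensorProduct.tmul_mul_tmul]
    have hex : ∃ c : Fin 2 → S, x = 1 ⊗ₜ c 0 + F ⊗ₜ c 1 := by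
      induction x using TensorProduct.induction_on with
      | zero => exact ⟨0, by simp⟩
      | tmul a b2 =>
        refine ⟨![↑(e a).1 * b2, ↑(e a).2 * b2], ?_⟩
        simp only [Matrix.cons_val_zero, Matrix.cons_val_one, Matrix.head_cons]
        calc a ⊗ₜ[R] b2 = (↑(e a).1 + ↑(e a).2 * F) ⊗ₜ[R] b2 := by rw [← he a]
          _ = ((e a).1 • (1 : S)) ⊗ₜ b2 + ((e a).2 • F) ⊗ₜ b2 := by
              rw [TensorProduct.add_tmul]
              congr 1 <;> rw [hsm] <;> ring_nf
          _ = 1 ⊗ₜ (↑(e a).1 * b2) + F ⊗ₜ (↑(e a).2 * b2) := by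
              rw [TensorProduct.smul_tmul, TensorProduct.smul_tmul, hsm, hsm]
      | add y z hy hz =>
        obtain ⟨cy, hcy⟩ := hy
        obtain ⟨cz, hcz⟩ := hz
        exact ⟨cy + cz, by simp only [Pi.add_apply, TensorProduct.tmul_add, hcy, hcz]; ring⟩
    have hkey : ∀ c : Fin 2 → S, x = 1 ⊗ₜ c 0 + F ⊗ₜ c 1 → c 0 = π1' x ∧ c 1 = π2' x := by
      intro c hc
      rw [hc]
      constructor
      · rw [map_add, hπ1', hπ1', he11, he1F]; ring
      · rw [map_add, hπ2', hπ2', he21, he2F]; ring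
    obtain ⟨c, hc⟩ := hex
    refine ⟨c, by dsimp only; rw [hsum]; exact hc, ?_⟩
    intro c' hc'
    rw [hsum] at hc'
    obtain ⟨h1, h2⟩ := hkey c' hc'
    obtain ⟨h1', h2'⟩ := hkey c hc
    funext j
    fin_cases j
    · exact h1.trans h1'.symm
    · exact h2.trans h2'.symm

end FreeTensor

/-- `(1, f_i)` is a basis of `O(V_i)` over the fixed subalgebra
`O(V_i)^{s_i}`; consequently `B_i := O(V_i) ⊗_{O(V_i)^{s_i}} O(V_i)` is free of rank 2
as a left `O(V_i)`-module and free of rank 2 as a right `O(V_i)`-module. -/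
theorem Bi_free_rank_two (hn : 1 ≤ n) (i : ℕ) (hi : i < n) :
    (∀ x : O k n (Vi k n i), ∃! c : (fixedO k n i) × (fixedO k n i),
        x = ↑c.1 + ↑c.2 * fbar k n (Vi k n i) i) ∧
    FreeRankVia (Algebra.TensorProduct.includeLeftRingHom :
        O k n (Vi k n i) →+* (O k n (Vi k n i) ⊗[fixedO k n i] O k n (Vi k n i))) 2 ∧
    FreeRankVia (Algebra.TensorProduct.includeRight.toRingHom :
        O k n (Vi k n i) →+* (O k n (Vi k n i) ⊗[fixedO k n i] O k n (Vi k n i))) 2 := by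
  refine ⟨part1 k n i hi, ?_, ?_⟩
  · exact (freeTensor (fixedO k n i) (fbar k n (Vi k n i) i) (part1 k n i hi)).1
  · exact (freeTensor (fixedO k n i) (fbar k n (Vi k n i) i) (part1 k n i hi)).2

end TLpaper
end
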